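/- arXiv:2101.06306 — 6 statements merged into one kernel-verified Lean document; each statement's English description precedes it below -/
import Mathlib

section
/- Let d ≥ 1, let A ⊂ ℝ^d be compact, let X_1, X_2, … be i.i.d. random points with common Borel distribution μ satisfying μ(A) = 1, and let B ⊆ A. Fix k ∈ ℕ. Suppose Z is a real random variable with continuous cumulative distribution function, and a, b ∈ (0,∞), c, c' ∈ ℝ are such that for every t ∈ ℝ, lim_{n→∞} P[ a·n·R_{n,k}^d − b·log n − c·log log n − c' ≤ t ] = P[Z ≤ t]. For r > 0 define N(r,k) := inf{ n ∈ ℕ : every x ∈ B has at least k of the points X_1,…,X_n in the closed ball B(x,r) } (inf ∅ := +∞). Then for every t ∈ ℝ, lim_{r→0+} P[ a·r^d·N(r,k) − b·log( (b/a)·r^{−d} ) − (c+b)·log log(r^{−d}) − c' ≤ t ] = P[Z ≤ t]. -/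
open MeasureTheory Metric Filter Topology

noncomputable section

/-- Every point of `B` has at least `k` of the points `X 0, …, X (n-1)` within distance `r`. -/
def covers {d : ℕ} (X : ℕ → EuclideanSpace ℝ (Fin d)) (n k : ℕ)
    (B : Set (EuclideanSpace ℝ (Fin d))) (r : ℝ) : Prop :=
  ∀ x ∈ B, k ≤ {i : ℕ | i < n ∧ X i ∈ closedBall x r}.ncard

/-- The `k`-coverage threshold `R_{n,k}`, as an extended real (`+∞` if no radius works). -/
def covThresh {d : ℕ} (X : ℕ → EuclideanSpace ℝ (Fin d)) (n k : ℕ)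
    (B : Set (EuclideanSpace ℝ (Fin d))) : EReal :=
  sInf {ρ : EReal | ∃ r : ℝ, ρ = (r : EReal) ∧ 0 < r ∧ covers X n k B r}

/-- `N(r,k)`: the smallest number `n` of points such that every point of `B` has at least `k`
of `X 0, …, X (n-1)` within distance `r`; `+∞` if there is no such `n`. -/
def coverNum {d : ℕ} (X : ℕ → EuclideanSpace ℝ (Fin d)) (k : ℕ)
    (B : Set (EuclideanSpace ℝ (Fin d))) (r : ℝ) : EReal :=
  sInf {ρ : EReal | ∃ n : ℕ, ρ = (n : EReal) ∧ covers X n k B r}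

section AuxLemmas

variable {d : ℕ} {X : ℕ → EuclideanSpace ℝ (Fin d)} {n m k : ℕ}
  {B : Set (EuclideanSpace ℝ (Fin d))} {r r' : ℝ}

lemma covers_mono_n (hnm : n ≤ m) (h : covers X n k B r) : covers X m k B r := by
  intro x hx
  refine (h x hx).trans (Set.ncard_le_ncard (fun i hi => ⟨hi.1.trans_le hnm, hi.2⟩)
    ((Set.finite_Iio m).subset (fun i hi => hi.1)))

lemma covers_mono_r (hrr : r ≤ r') (h : covers X n k B r) : covers X n k B r' := by
  intro x hx
  refine (h x hx).trans (Set.ncard_le_ncard (fun i hi => ⟨hi.1, closedBall_subset_closedBall hrr hi.2⟩)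
    ((Set.finite_Iio n).subset (fun i hi => hi.1)))

lemma covers_of_forall_gt (h : ∀ ε : ℝ, 0 < ε → covers X n k B (r + ε)) :
    covers X n k B r := by
  intro x hx
  set T : Set ℕ := {i | i < n ∧ X i ∉ closedBall x r} with hT
  have hTfin : T.Finite := (Set.finite_Iio n).subset (fun i hi => hi.1)
  obtain ⟨ε, hε, hsep⟩ : ∃ ε : ℝ, 0 < ε ∧ ∀ i ∈ T, r + ε < dist (X i) x := by
    rcases T.eq_empty_or_nonempty with hTe | hTe
    · exact ⟨1, one_pos, by simp [hTe]⟩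
    · obtain ⟨i₀, hi₀, hmin⟩ := Set.exists_min_image T (fun i => dist (X i) x) hTfin hTe
      have hd0 : r < dist (X i₀) x := by
        have := hi₀.2
        simpa [mem_closedBall, not_le] using this
      refine ⟨(dist (X i₀) x - r) / 2, by linarith, fun i hi => ?_⟩
      have := hmin i hi
      linarith
  refine (h ε hε x hx).trans (Set.ncard_le_ncard ?_ ((Set.finite_Iio n).subset (fun i hi => hi.1)))
  intro i hi
  refine ⟨hi.1, ?_⟩
  by_contra hnot
  have : r + ε < dist (X i) x := hsep i ⟨hi.1, hnot⟩
  have h2 : dist (X i) x ≤ r + ε := hi.2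
  linarith

lemma covThresh_nonneg : 0 ≤ covThresh X n k B := by
  refine le_sInf (fun ρ hρ => ?_)
  obtain ⟨s, rfl, hs, -⟩ := hρ
  exact_mod_cast hs.le

lemma covThresh_le_iff (hr : 0 < r) :
    covThresh X n k B ≤ (r : EReal) ↔ covers X n k B r := by
  constructor
  · intro h
    refine covers_of_forall_gt (fun ε hε => ?_)
    have hlt : covThresh X n k B < ((r + ε : ℝ) : EReal) :=
      h.trans_lt (by exact_mod_cast (by linarith : r < r + ε))
    obtain ⟨ρ, hρ, hρlt⟩ := sInf_lt_iff.mp hlt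
    obtain ⟨s, rfl, hs, hcov⟩ := hρ
    exact covers_mono_r (le_of_lt (by exact_mod_cast hρlt)) hcov
  · intro h
    exact sInf_le ⟨r, rfl, hr, h⟩

lemma coverNum_le_iff {x : ℝ} (hx : 0 ≤ x) :
    coverNum X k B r ≤ (x : EReal) ↔ covers X ⌊x⌋₊ k B r := by
  constructor
  · intro h
    have hne : {m : ℕ | covers X m k B r}.Nonempty := by
      by_contra hemp
      rw [Set.not_nonempty_iff_eq_empty] at hemp
      have : {ρ : EReal | ∃ m : ℕ, ρ = (m : EReal) ∧ covers X m k B r} = ∅ := by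
        ext ρ
        simp only [Set.mem_setOf_eq, Set.mem_empty_iff_false, iff_false]
        rintro ⟨m, rfl, hm⟩
        exact (Set.eq_empty_iff_forall_notMem.mp hemp m) hm
      rw [coverNum, this, sInf_empty] at h
      exact absurd h (by simp)
    set n₁ := sInf {m : ℕ | covers X m k B r} with hn₁
    have hcov₁ : covers X n₁ k B r := Nat.sInf_mem hne
    have hle : (n₁ : EReal) ≤ coverNum X k B r := by
      refine le_sInf (fun ρ hρ => ?_)
      obtain ⟨m, rfl, hm⟩ := hρ
      exact_mod_cast Nat.sInf_le hm
    have : (n₁ : EReal) ≤ (x : EReal) := hle.trans h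
    rw [← EReal.coe_coe_eq_natCast] at this
    have hnx : (n₁ : ℝ) ≤ x := EReal.coe_le_coe_iff.mp this
    exact covers_mono_n (Nat.le_floor hnx) hcov₁
  · intro h
    have hmem : ((⌊x⌋₊ : ℕ) : EReal) ∈ {ρ : EReal | ∃ n : ℕ, ρ = (n : EReal) ∧ covers X n k B r} :=
      ⟨⌊x⌋₊, rfl, h⟩
    refine (sInf_le hmem).trans ?_
    rw [← EReal.coe_coe_eq_natCast]
    exact EReal.coe_le_coe_iff.mpr (Nat.floor_le hx)

lemma ereal_unsub (x : EReal) (b1 b2 b3 tt : ℝ) :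
    x - (b1 : EReal) - (b2 : EReal) - (b3 : EReal) ≤ (tt : EReal) ↔
      x ≤ ((tt + b3 + b2 + b1 : ℝ) : EReal) := by
  rw [EReal.sub_le_iff_le_add (Or.inl (EReal.coe_ne_bot _)) (Or.inl (EReal.coe_ne_top _)),
    EReal.sub_le_iff_le_add (Or.inl (EReal.coe_ne_bot _)) (Or.inl (EReal.coe_ne_top _)),
    EReal.sub_le_iff_le_add (Or.inl (EReal.coe_ne_bot _)) (Or.inl (EReal.coe_ne_top _))]
  push_cast
  rfl

lemma ereal_mul_le {p s : ℝ} (hp : 0 < p) (x : EReal) :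
    (p : EReal) * x ≤ (s : EReal) ↔ x ≤ ((s / p : ℝ) : EReal) := by
  induction x using EReal.rec with
  | bot =>
      simp only [bot_le, iff_true]
      rw [show ((p:EReal) * ⊥ : EReal) = ⊥ from ?_]
      · exact bot_le
      · exact EReal.coe_mul_bot_of_pos hp
  | coe y =>
      rw [← EReal.coe_mul, EReal.coe_le_coe_iff, EReal.coe_le_coe_iff, le_div_iff₀ hp, mul_comm]
  | top =>
      rw [EReal.coe_mul_top_of_pos hp]
      simp

lemma ereal_top_pow {m : ℕ} (hm : m ≠ 0) : (⊤ : EReal) ^ m = ⊤ := by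
  induction m with
  | zero => simp at hm
  | succ p ih =>
      rcases Nat.eq_zero_or_pos p with h | h
      · subst h; simp
      · rw [pow_succ, ih h.ne']
        exact EReal.top_mul_top

lemma ereal_pow_le {d : ℕ} (hd : 1 ≤ d) {R : EReal} (hR : 0 ≤ R) {α r : ℝ}
    (hα : 0 < α) (hr : 0 < r) :
    (α : EReal) * R ^ d ≤ ((α * r ^ d : ℝ) : EReal) ↔ R ≤ (r : EReal) := by
  induction R using EReal.rec with
  | bot => simp at hR
  | coe x =>
      have hx : 0 ≤ x := by exact_mod_cast hR
      rw [← EReal.coe_pow, ← EReal.coe_mul, EReal.coe_le_coe_iff, EReal.coe_le_coe_iff,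
        mul_le_mul_iff_right₀ hα]
      exact pow_le_pow_iff_left₀ hx hr.le (by omega)
  | top =>
      rw [ereal_top_pow (by omega : d ≠ 0), EReal.coe_mul_top_of_pos hα]
      exact iff_of_false (fun h => EReal.coe_ne_top _ (top_le_iff.mp h))
        (fun h => EReal.coe_ne_top _ (top_le_iff.mp h))

end AuxLemmas

def auxS (d : ℕ) (t a b c c' : ℝ) (r : ℝ) : ℝ :=
  t + c' + (c + b) * Real.log (Real.log (r ^ (-(d : ℝ)))) +
    b * Real.log ((b / a) * r ^ (-(d : ℝ)))

def auxN (d : ℕ) (t a b c c' : ℝ) (r : ℝ) : ℕ :=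
  ⌊auxS d t a b c c' r / (a * r ^ d)⌋₊

def auxT (d : ℕ) (t a b c c' : ℝ) (r : ℝ) : ℝ :=
  a * (auxN d t a b c c' r : ℝ) * r ^ d - b * Real.log (auxN d t a b c c' r)
    - c * Real.log (Real.log (auxN d t a b c c' r)) - c'

section Limits

variable {d : ℕ} {t a b c c' : ℝ}

lemma tendsto_u (hd : 1 ≤ d) :
    Tendsto (fun r : ℝ => r ^ (-(d : ℝ))) (𝓝[>] (0 : ℝ)) atTop := by
  have h1 : Tendsto (fun r : ℝ => r ^ d) (𝓝[>] (0 : ℝ)) (𝓝[>] (0 : ℝ)) := by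
    rw [tendsto_nhdsWithin_iff]
    constructor
    · have h := (continuous_pow d (M := ℝ)).tendsto (0 : ℝ)
      rw [zero_pow (by omega : d ≠ 0)] at h
      exact h.mono_left nhdsWithin_le_nhds
    · filter_upwards [self_mem_nhdsWithin] with r (hr : 0 < r)
      exact pow_pos hr d
  have h2 := tendsto_inv_nhdsGT_zero.comp h1
  refine h2.congr' ?_
  filter_upwards [self_mem_nhdsWithin] with r (hr : 0 < r)
  show (r ^ d)⁻¹ = r ^ (-(d : ℝ))
  rw [Real.rpow_neg hr.le, Real.rpow_natCast]

lemma tendsto_L (hd : 1 ≤ d) :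
    Tendsto (fun r : ℝ => Real.log (r ^ (-(d : ℝ)))) (𝓝[>] (0 : ℝ)) atTop :=
  Real.tendsto_log_atTop.comp (tendsto_u hd)

lemma tendsto_auxS_ratio (hd : 1 ≤ d) (ha : 0 < a) (hb : 0 < b) :
    Tendsto (fun r : ℝ => auxS d t a b c c' r / (b * Real.log (r ^ (-(d : ℝ)))))
      (𝓝[>] (0 : ℝ)) (𝓝 1) := by
  set l := 𝓝[>] (0 : ℝ)
  have hL := tendsto_L (d := d) hd
  have hbL : Tendsto (fun r : ℝ => b * Real.log (r ^ (-(d : ℝ)))) l atTop :=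
    hL.const_mul_atTop hb
  have h1 : Tendsto (fun r : ℝ =>
      ((t + c') + b * Real.log (b / a)) / (b * Real.log (r ^ (-(d : ℝ))))) l (𝓝 0) :=
    Tendsto.div_atTop tendsto_const_nhds hbL
  have hlogdiv : Tendsto (fun x : ℝ => Real.log x / x) atTop (𝓝 0) :=
    Real.isLittleO_log_id_atTop.tendsto_div_nhds_zero
  have h2 : Tendsto (fun r : ℝ =>
      ((c + b) / b) * (Real.log (Real.log (r ^ (-(d : ℝ)))) / Real.log (r ^ (-(d : ℝ)))))
      l (𝓝 0) := by
    have := (hlogdiv.comp hL).const_mul ((c + b) / b)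
    simpa using this
  have hsum : Tendsto (fun r : ℝ =>
      ((t + c') + b * Real.log (b / a)) / (b * Real.log (r ^ (-(d : ℝ))))
        + ((c + b) / b) * (Real.log (Real.log (r ^ (-(d : ℝ)))) / Real.log (r ^ (-(d : ℝ))))
        + 1) l (𝓝 1) := by
    have := (h1.add h2).add_const 1
    simpa using this
  refine hsum.congr' ?_
  filter_upwards [self_mem_nhdsWithin, hL.eventually_gt_atTop 1] with r (hr : 0 < r) hL1
  have hu : 0 < r ^ (-(d : ℝ)) := Real.rpow_pos_of_pos hr _
  have hL0 : (0 : ℝ) < Real.log (r ^ (-(d : ℝ))) := lt_trans one_pos hL1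
  rw [auxS, Real.log_mul (div_pos hb ha).ne' hu.ne']
  field_simp
  ring

lemma tendsto_auxS (hd : 1 ≤ d) (ha : 0 < a) (hb : 0 < b) :
    Tendsto (auxS d t a b c c') (𝓝[>] (0 : ℝ)) atTop := by
  have hL := tendsto_L (d := d) hd
  have hbL : Tendsto (fun r : ℝ => b * Real.log (r ^ (-(d : ℝ)))) (𝓝[>] (0:ℝ)) atTop :=
    hL.const_mul_atTop hb
  have h := (tendsto_auxS_ratio (t := t) (c := c) (c' := c') hd ha hb).pos_mul_atTop one_pos hbL
  refine h.congr' ?_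
  filter_upwards [hL.eventually_gt_atTop 1] with r hL1
  have hL0 : (0 : ℝ) < Real.log (r ^ (-(d : ℝ))) := lt_trans one_pos hL1
  field_simp

lemma tendsto_auxQ (hd : 1 ≤ d) (ha : 0 < a) (hb : 0 < b) :
    Tendsto (fun r : ℝ => auxS d t a b c c' r / (a * r ^ d)) (𝓝[>] (0 : ℝ)) atTop := by
  have h := ((tendsto_auxS (t := t) (c := c) (c' := c') hd ha hb).atTop_mul_atTop₀
      (tendsto_u hd)).atTop_div_const ha
  refine h.congr' ?_
  filter_upwards [self_mem_nhdsWithin] with r (hr : 0 < r)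
  have hrd : (0 : ℝ) < r ^ d := pow_pos hr d
  have hu : r ^ (-(d : ℝ)) = (r ^ d)⁻¹ := by
    rw [Real.rpow_neg hr.le, Real.rpow_natCast]
  rw [hu, ← div_eq_mul_inv, div_div, mul_comm (r ^ d) a]

lemma tendsto_auxN (hd : 1 ≤ d) (ha : 0 < a) (hb : 0 < b) :
    Tendsto (auxN d t a b c c') (𝓝[>] (0 : ℝ)) atTop :=
  tendsto_nat_floor_atTop.comp (tendsto_auxQ (t := t) (c := c) (c' := c') hd ha hb)

lemma tendsto_auxT (hd : 1 ≤ d) (ha : 0 < a) (hb : 0 < b) :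
    Tendsto (auxT d t a b c c') (𝓝[>] (0 : ℝ)) (𝓝 t) := by
  set l := 𝓝[>] (0 : ℝ) with hl
  set u : ℝ → ℝ := fun r => r ^ (-(d : ℝ)) with hu
  set L : ℝ → ℝ := fun r => Real.log (u r) with hLdef
  set S : ℝ → ℝ := auxS d t a b c c' with hS
  set q : ℝ → ℝ := fun r => S r / (a * r ^ d) with hqdef
  set N : ℝ → ℝ := fun r => (auxN d t a b c c' r : ℝ) with hNdef
  have hL : Tendsto L l atTop := tendsto_L hd
  have hq : Tendsto q l atTop := tendsto_auxQ hd ha hb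
  have hn : Tendsto (auxN d t a b c c') l atTop := tendsto_auxN hd ha hb
  have hNt : Tendsto N l atTop := tendsto_natCast_atTop_atTop.comp hn
  have hSt : Tendsto S l atTop := tendsto_auxS hd ha hb
  have hlogN : Tendsto (fun r => Real.log (N r)) l atTop := Real.tendsto_log_atTop.comp hNt
  -- basic eventual facts
  have ev0 : ∀ᶠ r in l, 0 < r := self_mem_nhdsWithin
  have evq1 : ∀ᶠ r in l, 1 ≤ q r := hq.eventually_ge_atTop 1
  have evS1 : ∀ᶠ r in l, 1 ≤ S r := hSt.eventually_ge_atTop 1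
  have evL1 : ∀ᶠ r in l, 1 < L r := hL.eventually_gt_atTop 1
  have evN1 : ∀ᶠ r in l, 1 ≤ auxN d t a b c c' r := hn.eventually_ge_atTop 1
  have evlogN1 : ∀ᶠ r in l, 1 < Real.log (N r) := hlogN.eventually_gt_atTop 1
  -- floor bounds
  have hfloor : ∀ᶠ r in l, N r ≤ q r ∧ q r - 1 ≤ N r := by
    filter_upwards [evq1] with r hq1
    have hq0 : (0 : ℝ) ≤ q r := le_trans zero_le_one hq1
    constructor
    · exact Nat.floor_le hq0
    · have := Nat.lt_floor_add_one (q r)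
      simp only [hNdef]
      rw [auxN]
      linarith [Nat.lt_floor_add_one (q r)]
  -- A1
  have hA1 : Tendsto (fun r => a * N r * r ^ d - S r) l (𝓝 0) := by
    have hg : Tendsto (fun r : ℝ => a * r ^ d) l (𝓝 0) := by
      have h := ((continuous_pow d (M := ℝ)).tendsto (0 : ℝ)).const_mul a
      rw [zero_pow (by omega : d ≠ 0), mul_zero] at h
      exact h.mono_left nhdsWithin_le_nhds
    refine squeeze_zero_norm' ?_ hg
    filter_upwards [ev0, evq1, hfloor] with r hr hq1 hfl
    have harpos : (0 : ℝ) < a * r ^ d := by positivity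
    have hqs : q r * (a * r ^ d) = S r := div_mul_cancel₀ _ harpos.ne'
    have hid : a * N r * r ^ d - S r = (N r - q r) * (a * r ^ d) := by
      rw [sub_mul, hqs]; ring
    rw [hid, Real.norm_eq_abs, abs_mul, abs_of_pos harpos]
    have : |N r - q r| ≤ 1 := by
      rw [abs_le]; constructor <;> [linarith [hfl.2]; linarith [hfl.1]]
    nlinarith [harpos.le]
  -- N / q → 1
  have hNq : Tendsto (fun r => N r / q r) l (𝓝 1) := by
    have hlow : Tendsto (fun r => 1 - (q r)⁻¹) l (𝓝 1) := by
      have := (tendsto_inv_atTop_zero.comp hq).const_sub 1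
      simpa using this
    refine tendsto_of_tendsto_of_tendsto_of_le_of_le' hlow tendsto_const_nhds ?_ ?_
    · filter_upwards [evq1, hfloor] with r hq1 hfl
      have hq0 : (0 : ℝ) < q r := lt_of_lt_of_le one_pos hq1
      have h1 : (1 : ℝ) - (q r)⁻¹ = (q r - 1) / q r := by field_simp
      rw [h1, div_le_iff₀ hq0]
      calc q r - 1 ≤ N r := hfl.2
        _ = N r / q r * q r := by field_simp
    · filter_upwards [evq1, hfloor] with r hq1 hfl
      have hq0 : (0 : ℝ) < q r := lt_of_lt_of_le one_pos hq1
      exact div_le_one_of_le₀ hfl.1 hq0.le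
  -- A2
  have hA2 : Tendsto (fun r => Real.log (N r) - Real.log (q r)) l (𝓝 0) := by
    have h := (Real.continuousAt_log one_ne_zero).tendsto.comp hNq
    rw [Real.log_one] at h
    refine h.congr' ?_
    filter_upwards [evq1, evN1] with r hq1 hN1
    have hq0 : (0 : ℝ) < q r := lt_of_lt_of_le one_pos hq1
    have hN0 : (0 : ℝ) < N r := by
      simp only [hNdef]; exact_mod_cast Nat.lt_of_lt_of_le Nat.zero_lt_one hN1
    show Real.log (N r / q r) = Real.log (N r) - Real.log (q r)
    rw [Real.log_div hN0.ne' hq0.ne']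
  -- A3
  have hA3 : Tendsto (fun r => Real.log (S r) - Real.log b - Real.log (L r)) l (𝓝 0) := by
    have hrat : Tendsto (fun r => S r / (b * L r)) l (𝓝 1) := tendsto_auxS_ratio hd ha hb
    have h := (Real.continuousAt_log one_ne_zero).tendsto.comp hrat
    rw [Real.log_one] at h
    refine h.congr' ?_
    filter_upwards [evS1, evL1] with r hS1 hL1
    have hS0 : (0 : ℝ) < S r := lt_of_lt_of_le one_pos hS1
    have hL0 : (0 : ℝ) < L r := lt_trans one_pos hL1
    show Real.log (S r / (b * L r)) = Real.log (S r) - Real.log b - Real.log (L r)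
    rw [Real.log_div hS0.ne' (by positivity), Real.log_mul hb.ne' hL0.ne']
    ring
  -- log q = log S + L - log a  (eventually)
  have hlogq : ∀ᶠ r in l, Real.log (q r) = Real.log (S r) + L r - Real.log a := by
    filter_upwards [ev0, evS1] with r hr hS1
    have hS0 : (0 : ℝ) < S r := lt_of_lt_of_le one_pos hS1
    have hu0 : (0 : ℝ) < u r := Real.rpow_pos_of_pos hr _
    have hqeq : q r = S r * u r / a := by
      have hueq : u r = (r ^ d)⁻¹ := by
        simp only [hu]; rw [Real.rpow_neg hr.le, Real.rpow_natCast]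
      simp only [hqdef, hueq]
      rw [← div_eq_mul_inv, div_div, mul_comm (r ^ d) a]
    rw [hqeq, Real.log_div (by positivity) ha.ne', Real.log_mul hS0.ne' hu0.ne']
  -- A4 : log log N - log L → 0
  have hA4 : Tendsto (fun r => Real.log (Real.log (N r)) - Real.log (L r)) l (𝓝 0) := by
    have hgoal : Tendsto (fun r => Real.log (N r) / L r) l (𝓝 1) := by
      have hsum : Tendsto (fun r =>
          ((Real.log (N r) - Real.log (q r)) + (Real.log (S r) - Real.log b - Real.log (L r))
            + (Real.log b - Real.log a) + Real.log (L r)) / L r + 1) l (𝓝 1) := by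
        have hlogdiv : Tendsto (fun x : ℝ => Real.log x / x) atTop (𝓝 0) :=
          Real.isLittleO_log_id_atTop.tendsto_div_nhds_zero
        have t1 : Tendsto (fun r => (Real.log (N r) - Real.log (q r)) / L r) l (𝓝 0) :=
          Tendsto.div_atTop hA2 hL
        have t2 : Tendsto (fun r =>
            (Real.log (S r) - Real.log b - Real.log (L r)) / L r) l (𝓝 0) :=
          Tendsto.div_atTop hA3 hL
        have t3 : Tendsto (fun r => (Real.log b - Real.log a) / L r) l (𝓝 0) :=
          Tendsto.div_atTop tendsto_const_nhds hL
        have t4 : Tendsto (fun r => Real.log (L r) / L r) l (𝓝 0) := hlogdiv.comp hL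
        have := (((t1.add t2).add t3).add t4).add_const 1
        rw [zero_add, zero_add, zero_add, zero_add] at this
        refine this.congr ?_
        intro r
        ring
      refine hsum.congr' ?_
      filter_upwards [evL1, hlogq] with r hL1 hlq
      have hL0 : (0 : ℝ) < L r := lt_trans one_pos hL1
      rw [hlq]
      field_simp
      ring
    have h := (Real.continuousAt_log one_ne_zero).tendsto.comp hgoal
    rw [Real.log_one] at h
    refine h.congr' ?_
    filter_upwards [evL1, evlogN1] with r hL1 hlN1
    have hL0 : (0 : ℝ) < L r := lt_trans one_pos hL1
    have hlN0 : (0 : ℝ) < Real.log (N r) := lt_trans one_pos hlN1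
    show Real.log (Real.log (N r) / L r) = Real.log (Real.log (N r)) - Real.log (L r)
    rw [Real.log_div hlN0.ne' hL0.ne']
  -- assemble
  have hfinal : Tendsto (fun r =>
      t + (a * N r * r ^ d - S r) - b * (Real.log (N r) - Real.log (q r))
        - b * (Real.log (S r) - Real.log b - Real.log (L r))
        - c * (Real.log (Real.log (N r)) - Real.log (L r))) l (𝓝 t) := by
    have := (((tendsto_const_nhds (x := t) (f := l)).add hA1).sub (hA2.const_mul b)).sub
      (hA3.const_mul b) |>.sub (hA4.const_mul c)
    simpa using this
  refine hfinal.congr' ?_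
  filter_upwards [ev0, evS1, hlogq, evL1] with r hr hS1 hlq hL1
  have hu0 : (0 : ℝ) < u r := Real.rpow_pos_of_pos hr _
  have e1 : Real.log ((b / a) * u r) = Real.log b - Real.log a + L r := by
    rw [Real.log_mul (div_pos hb ha).ne' hu0.ne', Real.log_div hb.ne' ha.ne']
  have hSexp : S r = t + c' + (c + b) * Real.log (L r) +
      b * (Real.log b - Real.log a + L r) := by
    simp only [hS, auxS, ← e1]; rfl
  show _ = auxT d t a b c c' r
  rw [auxT]
  rw [hlq]
  nth_rewrite 1 [hSexp]
  ring

end Limits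

lemma tendsto_comp_monotone {α : Type*} {l : Filter α} {G : ℕ → ℝ → ℝ} {F : ℝ → ℝ}
    (hmono : ∀ n, Monotone (G n)) (hG : ∀ s : ℝ, Tendsto (fun n => G n s) atTop (𝓝 (F s)))
    (hF : Continuous F) {n : α → ℕ} (hn : Tendsto n l atTop) {τ : α → ℝ} {t : ℝ}
    (hτ : Tendsto τ l (𝓝 t)) : Tendsto (fun x => G (n x) (τ x)) l (𝓝 (F t)) := by
  rw [Metric.tendsto_nhds]
  intro ε hε
  obtain ⟨δ, hδ, hFd⟩ := Metric.continuous_iff.mp hF t (ε / 2) (half_pos hε)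
  have hdist1 : dist (F (t - δ / 2)) (F t) < ε / 2 := by
    apply hFd
    rw [Real.dist_eq]
    rw [abs_sub_lt_iff]
    constructor <;> linarith
  have hdist2 : dist (F (t + δ / 2)) (F t) < ε / 2 := by
    apply hFd
    rw [Real.dist_eq, abs_sub_lt_iff]
    constructor <;> linarith
  have h1 : Tendsto (fun x => G (n x) (t - δ / 2)) l (𝓝 (F (t - δ / 2))) :=
    (hG (t - δ / 2)).comp hn
  have h2 : Tendsto (fun x => G (n x) (t + δ / 2)) l (𝓝 (F (t + δ / 2))) :=
    (hG (t + δ / 2)).comp hn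
  have e1 : ∀ᶠ x in l, F t - ε < G (n x) (t - δ / 2) := by
    have : F t - ε < F (t - δ / 2) := by
      rw [Real.dist_eq, abs_sub_lt_iff] at hdist1
      linarith [hdist1.2]
    exact h1.eventually (eventually_gt_nhds this)
  have e2 : ∀ᶠ x in l, G (n x) (t + δ / 2) < F t + ε := by
    have : F (t + δ / 2) < F t + ε := by
      rw [Real.dist_eq, abs_sub_lt_iff] at hdist2
      linarith [hdist2.1]
    exact h2.eventually (eventually_lt_nhds this)
  have e3 : ∀ᶠ x in l, dist (τ x) t < δ / 2 :=
    hτ (Metric.ball_mem_nhds t (half_pos hδ))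
  filter_upwards [e1, e2, e3] with x hx1 hx2 hx3
  rw [Real.dist_eq, abs_sub_lt_iff] at hx3 ⊢
  have hlow : t - δ / 2 ≤ τ x := by linarith [hx3.2]
  have hhigh : τ x ≤ t + δ / 2 := by linarith [hx3.1]
  have hm1 : G (n x) (t - δ / 2) ≤ G (n x) (τ x) := hmono _ hlow
  have hm2 : G (n x) (τ x) ≤ G (n x) (t + δ / 2) := hmono _ hhigh
  constructor <;> linarith


theorem covering_number_from_coverage_threshold
    {d : ℕ} (hd : 1 ≤ d)
    {Ω : Type*} [MeasurableSpace Ω] (P : Measure Ω) [IsProbabilityMeasure P]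
    {Ω' : Type*} [MeasurableSpace Ω'] (P' : Measure Ω') [IsProbabilityMeasure P']
    (A B : Set (EuclideanSpace ℝ (Fin d))) (hAcompact : IsCompact A) (hBA : B ⊆ A)
    (μ : Measure (EuclideanSpace ℝ (Fin d))) [IsProbabilityMeasure μ] (hμA : μ A = 1)
    (X : ℕ → Ω → EuclideanSpace ℝ (Fin d))
    (hXmeas : ∀ i, Measurable (X i))
    (hXlaw : ∀ i, Measure.map (X i) P = μ)
    (hXindep : ProbabilityTheory.iIndepFun X P)
    (k : ℕ) (hk : 1 ≤ k)
    (Z : Ω' → ℝ)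
    (hZcdf : Continuous (fun t : ℝ => (P' {ω' : Ω' | Z ω' ≤ t}).toReal))
    (a b c c' : ℝ) (ha : 0 < a) (hb : 0 < b)
    (hconv : ∀ t : ℝ,
      Tendsto
        (fun n : ℕ =>
          (P {ω : Ω |
            ((a * (n : ℝ) : ℝ) : EReal) * (covThresh (fun i => X i ω) n k B) ^ d
              - ((b * Real.log (n : ℝ) : ℝ) : EReal)
              - ((c * Real.log (Real.log (n : ℝ)) : ℝ) : EReal)
              - ((c' : ℝ) : EReal)
              ≤ ((t : ℝ) : EReal)}).toReal)
        atTop (𝓝 ((P' {ω' : Ω' | Z ω' ≤ t}).toReal))) :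
    ∀ t : ℝ,
      Tendsto
        (fun r : ℝ =>
          (P {ω : Ω |
            ((a * r ^ d : ℝ) : EReal) * (coverNum (fun i => X i ω) k B r)
              - ((b * Real.log ((b / a) * r ^ (-(d : ℝ))) : ℝ) : EReal)
              - (((c + b) * Real.log (Real.log (r ^ (-(d : ℝ)))) : ℝ) : EReal)
              - ((c' : ℝ) : EReal)
              ≤ ((t : ℝ) : EReal)}).toReal)
        (𝓝[>] (0 : ℝ)) (𝓝 ((P' {ω' : Ω' | Z ω' ≤ t}).toReal)) := by
  intro t
  set l := 𝓝[>] (0 : ℝ) with hldef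
  set F : ℝ → ℝ := fun s => (P' {ω' : Ω' | Z ω' ≤ s}).toReal with hFdef
  set G : ℕ → ℝ → ℝ := fun n s =>
    (P {ω : Ω |
      ((a * (n : ℝ) : ℝ) : EReal) * (covThresh (fun i => X i ω) n k B) ^ d
        - ((b * Real.log (n : ℝ) : ℝ) : EReal)
        - ((c * Real.log (Real.log (n : ℝ)) : ℝ) : EReal)
        - ((c' : ℝ) : EReal)
        ≤ ((s : ℝ) : EReal)}).toReal with hGdef
  have hGmono : ∀ n, Monotone (G n) := by
    intro n s s' hss
    apply ENNReal.toReal_mono (measure_ne_top P _)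
    apply measure_mono
    intro ω hω
    exact le_trans hω (EReal.coe_le_coe_iff.mpr hss)
  have hGF : ∀ s : ℝ, Tendsto (fun n => G n s) atTop (𝓝 (F s)) := fun s => hconv s
  have hmain : Tendsto (fun r : ℝ => G (auxN d t a b c c' r) (auxT d t a b c c' r)) l
      (𝓝 (F t)) :=
    tendsto_comp_monotone hGmono hGF hZcdf (tendsto_auxN hd ha hb) (tendsto_auxT hd ha hb)
  refine hmain.congr' ?_
  filter_upwards [self_mem_nhdsWithin,
    (tendsto_auxS (t := t) (c := c) (c' := c') hd ha hb).eventually_ge_atTop 0,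
    (tendsto_auxN (t := t) (c := c) (c' := c') hd ha hb).eventually_ge_atTop 1]
    with r (hr : 0 < r) hS0 hN1
  simp only [hGdef]
  congr 1
  congr 1
  ext ω
  simp only [Set.mem_setOf_eq]
  have hard : (0 : ℝ) < a * r ^ d := by positivity
  have hNpos : (0 : ℝ) < a * ((auxN d t a b c c' r : ℕ) : ℝ) := by
    have : (1 : ℝ) ≤ ((auxN d t a b c c' r : ℕ) : ℝ) := by exact_mod_cast hN1
    nlinarith
  rw [ereal_unsub, ereal_unsub]
  have hT : auxT d t a b c c' r + c' + c * Real.log (Real.log ((auxN d t a b c c' r : ℕ) : ℝ))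
      + b * Real.log ((auxN d t a b c c' r : ℕ) : ℝ)
      = a * ((auxN d t a b c c' r : ℕ) : ℝ) * r ^ d := by
    rw [auxT]; ring
  rw [hT]
  have hSdef : t + c' + (c + b) * Real.log (Real.log (r ^ (-(d : ℝ))))
      + b * Real.log ((b / a) * r ^ (-(d : ℝ))) = auxS d t a b c c' r := rfl
  rw [hSdef]
  rw [ereal_mul_le hard]
  have hq0 : (0 : ℝ) ≤ auxS d t a b c c' r / (a * r ^ d) := div_nonneg hS0 hard.le
  rw [coverNum_le_iff hq0]
  rw [ereal_pow_le hd covThresh_nonneg hNpos hr]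
  rw [covThresh_le_iff hr]
  exact Iff.rfl
end
end

section
/- Let (U_{n,k})_{(n,k)∈ℕ×ℕ} be an array of real-valued random variables on a common probability space such that almost surely U_{n+1,k} ≤ U_{n,k} ≤ U_{n,k+1} for all (n,k). Let β ∈ [0,∞), ε > 0, c > 0, and let (k(n))_{n∈ℕ} be an ℕ-valued sequence with k(n)/log n → β as n → ∞. (a) If P[ n·U_{n,⌊(β+ε)·log n⌋} > log n ] ≤ c·n^{−ε} for all but finitely many n, then almost surely limsup_{n→∞} n·U_{n,k(n)}/log n ≤ 1. (b) If ε < β and P[ n·U_{n,⌈(β−ε)·log n⌉} ≤ log n ] ≤ c·n^{−ε} for all but finitely many n, then almost surely liminf_{n→∞} n·U_{n,k(n)}/log n ≥ 1. -/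
open MeasureTheory Filter Topology

noncomputable section

private lemma bc_aux {Ω : Type*} [MeasurableSpace Ω] (P : Measure Ω) [IsProbabilityMeasure P]
    (s : ℕ → Set Ω) (b : ℕ → ℝ) (hb : Summable b)
    (h : ∀ᶠ m in atTop, P (s m) ≤ ENNReal.ofReal (b m)) :
    ∀ᵐ ω ∂P, ∀ᶠ m in atTop, ω ∉ s m := by
  obtain ⟨M, hM⟩ := eventually_atTop.1 h
  have hsum : (∑' m : ℕ, P (s (m + M))) ≠ ⊤ := by
    have h1 : ∀ m : ℕ, P (s (m + M)) ≤ ENNReal.ofReal (|b (m + M)|) := fun m =>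
      (hM (m + M) (Nat.le_add_left _ _)).trans (ENNReal.ofReal_le_ofReal (le_abs_self _))
    have h2 : Summable fun m => |b (m + M)| := (summable_nat_add_iff M).2 hb.abs
    refine ne_of_lt (lt_of_le_of_lt (ENNReal.tsum_le_tsum h1) ?_)
    rw [← ENNReal.ofReal_tsum_of_nonneg (fun m => abs_nonneg _) h2]
    exact ENNReal.ofReal_lt_top
  filter_upwards [MeasureTheory.ae_eventually_notMem hsum] with ω hω
  obtain ⟨a, ha⟩ := eventually_atTop.1 hω
  rw [eventually_atTop]
  refine ⟨a + M, fun m hm => ?_⟩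
  have := ha (m - M) (by omega)
  rwa [Nat.sub_add_cancel (by omega)] at this

set_option maxHeartbeats 2000000 in
theorem subsequence_trick
    {Ω : Type*} [MeasurableSpace Ω] (P : Measure Ω) [IsProbabilityMeasure P]
    (U : ℕ → ℕ → Ω → ℝ)
    (hmono : ∀ᵐ ω ∂P, ∀ n k : ℕ, U (n + 1) k ω ≤ U n k ω ∧ U n k ω ≤ U n (k + 1) ω)
    (β : ℝ) (hβ : 0 ≤ β) (ε : ℝ) (hε : 0 < ε) (c : ℝ) (hc : 0 < c)
    (kseq : ℕ → ℕ)
    (hk : Tendsto (fun n : ℕ => (kseq n : ℝ) / Real.log n) atTop (𝓝 β)) :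
    ((∀ᶠ n : ℕ in atTop,
        P {ω : Ω | Real.log n < (n : ℝ) * U n ⌊(β + ε) * Real.log n⌋₊ ω} ≤
          ENNReal.ofReal (c * (n : ℝ) ^ (-ε))) →
      ∀ᵐ ω ∂P,
        Filter.limsup (fun n : ℕ => (((n : ℝ) * U n (kseq n) ω / Real.log n : ℝ) : EReal))
          atTop ≤ (1 : EReal)) ∧
    (ε < β →
      (∀ᶠ n : ℕ in atTop,
        P {ω : Ω | (n : ℝ) * U n ⌈(β - ε) * Real.log n⌉₊ ω ≤ Real.log n} ≤
          ENNReal.ofReal (c * (n : ℝ) ^ (-ε))) →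
      ∀ᵐ ω ∂P,
        (1 : EReal) ≤
          Filter.liminf (fun n : ℕ => (((n : ℝ) * U n (kseq n) ω / Real.log n : ℝ) : EReal))
            atTop) := by
  classical
  -- the polynomial subsequence
  set p : ℕ := ⌈ε⁻¹⌉₊ + 1 with hp_def
  have hpε : 1 < (p : ℝ) * ε := by
    have h1 : ε⁻¹ < (p : ℝ) := by
      have h2 := Nat.le_ceil (ε⁻¹)
      have h3 : ((⌈ε⁻¹⌉₊ : ℕ) : ℝ) + 1 = (p : ℝ) := by push_cast [hp_def]; ring
      linarith
    calc (1:ℝ) = ε⁻¹ * ε := (inv_mul_cancel₀ hε.ne').symm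
      _ < p * ε := mul_lt_mul_of_pos_right h1 hε
  set Nn : ℕ → ℕ := fun m => (m + 2) ^ p with hNn
  have hN2 : ∀ m, m + 2 ≤ Nn m := fun m => Nat.le_self_pow (by omega) _
  have hNmono : StrictMono Nn := fun a b hab =>
    Nat.pow_lt_pow_left (by omega) (by omega)
  have hNtendsto : Tendsto Nn atTop atTop := hNmono.tendsto_atTop
  have hNcast : ∀ m, (Nn m : ℝ) = ((m : ℝ) + 2) ^ p := by
    intro m; simp only [hNn]; push_cast; ring
  have hNpos : ∀ m, (0:ℝ) < (Nn m : ℝ) := by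
    intro m; rw [hNcast]; positivity
  have hN1 : ∀ m, (1:ℝ) ≤ (Nn m : ℝ) := by
    intro m
    have := hN2 m
    exact_mod_cast Nat.one_le_iff_ne_zero.2 (by omega)
  have hratio : Tendsto (fun m => (Nn (m+1) : ℝ) / Nn m) atTop (𝓝 1) := by
    have hbase : Tendsto (fun m : ℕ => 1 + ((m:ℝ)+2)⁻¹) atTop (𝓝 1) := by
      have h2 : Tendsto (fun m : ℕ => (m:ℝ) + 2) atTop atTop :=
        tendsto_atTop_add_const_right _ 2 tendsto_natCast_atTop_atTop
      have h3 := h2.inv_tendsto_atTop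
      simpa using tendsto_const_nhds.add h3
    have heq : ∀ m : ℕ, (Nn (m+1) : ℝ) / Nn m = (1 + ((m:ℝ)+2)⁻¹)^p := by
      intro m
      rw [hNcast, hNcast, ← div_pow]
      congr 1
      have hne : ((m:ℝ)+2) ≠ 0 := by positivity
      push_cast
      field_simp
      ring
    have := hbase.pow p
    rw [one_pow] at this
    exact this.congr fun m => (heq m).symm
  have hlogN_top : Tendsto (fun m => Real.log (Nn m)) atTop atTop :=
    Real.tendsto_log_atTop.comp (tendsto_natCast_atTop_atTop.comp hNtendsto)
  have hlogdiff : Tendsto (fun m => Real.log (Nn (m+1)) - Real.log (Nn m)) atTop (𝓝 0) := by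
    have hcont : Tendsto (fun m => Real.log ((Nn (m+1):ℝ) / Nn m)) atTop (𝓝 0) := by
      have := (Real.continuousAt_log one_ne_zero).tendsto.comp hratio
      simpa [Function.comp_def] using this
    refine hcont.congr fun m => ?_
    rw [Real.log_div (hNpos _).ne' (hNpos _).ne']
  -- summability of the bound along the subsequence
  have hsummable : Summable (fun m : ℕ => c * (Nn m : ℝ) ^ (-ε)) := by
    have h1 : ∀ m : ℕ, (Nn m : ℝ) ^ (-ε) = ((m + 2 : ℕ) : ℝ) ^ (-((p:ℝ) * ε)) := by
      intro m
      have h2 : (Nn m : ℝ) = ((m + 2 : ℕ) : ℝ) ^ (p:ℝ) := by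
        rw [Real.rpow_natCast, hNcast]; push_cast; ring
      rw [h2, ← Real.rpow_mul (by positivity)]
      congr 1; ring
    have h3 : Summable (fun n : ℕ => ((n:ℝ)) ^ (-((p:ℝ)*ε))) :=
      Real.summable_nat_rpow.2 (by linarith)
    have h4 : Summable (fun m : ℕ => ((m + 2 : ℕ):ℝ) ^ (-((p:ℝ)*ε))) :=
      (summable_nat_add_iff 2).2 h3
    exact (h4.congr fun m => (h1 m).symm).mul_left c
  -- auxiliary: second factor of the tail bound
  have hε2 : (0:ℝ) < ε/2 := by linarith
  have h2mul : ∀ᶠ m in atTop, 1 ≤ ε/2 * Real.log (Nn m) :=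
    (hlogN_top.const_mul_atTop hε2).eventually_ge_atTop 1
  constructor
  · -- part (a)
    intro ha
    have hwin : ∀ᶠ m in atTop,
        (β + ε/2) * Real.log (Nn (m+1)) ≤ (β + ε) * Real.log (Nn m) := by
      have h1 : ∀ᶠ m in atTop,
          (β + ε/2) * (Real.log (Nn (m+1)) - Real.log (Nn m)) ≤ 1 := by
        have := (hlogdiff.const_mul (β + ε/2)).eventually
          (eventually_le_nhds (show (β + ε/2)*0 < 1 by norm_num))
        simpa using this
      filter_upwards [h1, h2mul] with m h1 h2
      nlinarith [h1, h2]
    have hklog_up : ∀ᶠ n : ℕ in atTop, (kseq n : ℝ) ≤ (β + ε/2) * Real.log n := by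
      have h1 := hk.eventually (eventually_le_nhds (show β < β + ε/2 by linarith))
      filter_upwards [h1, eventually_ge_atTop 2] with n h1 h2
      have hlog : 0 < Real.log n := Real.log_pos (by exact_mod_cast Nat.lt_of_lt_of_le one_lt_two h2)
      calc (kseq n : ℝ) = (kseq n / Real.log n) * Real.log n := by field_simp
        _ ≤ (β + ε/2) * Real.log n := mul_le_mul_of_nonneg_right h1 hlog.le
    have hBC : ∀ᵐ ω ∂P, ∀ᶠ m in atTop,
        (Nn m : ℝ) * U (Nn m) ⌊(β+ε) * Real.log (Nn m)⌋₊ ω ≤ Real.log (Nn m) := by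
      filter_upwards [bc_aux P
        (fun m => {ω : Ω | Real.log (Nn m) < (Nn m : ℝ) * U (Nn m) ⌊(β + ε) * Real.log (Nn m)⌋₊ ω})
        _ hsummable (hNtendsto.eventually ha)] with ω hω
      filter_upwards [hω] with m hm
      simpa using not_lt.1 hm
    filter_upwards [hmono, hBC] with ω hmω hBCω
    have monoN : ∀ (k : ℕ) {a b : ℕ}, a ≤ b → U b k ω ≤ U a k ω := by
      intro k a b hab
      induction b, hab using Nat.le_induction with
      | base => exact le_rfl
      | succ b hb ih => exact le_trans (hmω b k).1 ih
    have monoK : ∀ (n : ℕ) {a b : ℕ}, a ≤ b → U n a ω ≤ U n b ω := by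
      intro n a b hab
      induction b, hab using Nat.le_induction with
      | base => exact le_rfl
      | succ b hb ih => exact le_trans ih (hmω n b).2
    by_contra hcon
    push_neg at hcon
    obtain ⟨r, h1r, hrl⟩ := EReal.exists_between_coe_real hcon
    have h1r' : (1:ℝ) < r := by exact_mod_cast h1r
    have hratr : ∀ᶠ m in atTop, (Nn (m+1) : ℝ) ≤ r * Nn m := by
      have h1 := hratio.eventually (eventually_le_nhds h1r')
      filter_upwards [h1] with m h1
      rw [div_le_iff₀ (hNpos m)] at h1
      linarith
    have hev : ∀ᶠ n : ℕ in atTop, ((n:ℝ) * U n (kseq n) ω / Real.log n) ≤ r := by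
      obtain ⟨M, hM⟩ := eventually_atTop.1 (hBCω.and (hwin.and hratr))
      obtain ⟨N₀, hN₀⟩ := eventually_atTop.1 hklog_up
      rw [eventually_atTop]
      refine ⟨max (Nn M) N₀, fun n hn => ?_⟩
      have hnN : Nn M ≤ n := le_trans (le_max_left _ _) hn
      have hnN₀ : N₀ ≤ n := le_trans (le_max_right _ _) hn
      have hMn : M ≤ n := le_trans (by have := hN2 M; omega) hnN
      set m := Nat.findGreatest (fun j => Nn j ≤ n) n with hm_def
      have hm1 : Nn m ≤ n := Nat.findGreatest_spec (P := fun j => Nn j ≤ n) hMn hnN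
      have hm2 : M ≤ m := Nat.le_findGreatest (P := fun j => Nn j ≤ n) hMn hnN
      have hm3 : n < Nn (m+1) := by
        by_contra hcc
        push_neg at hcc
        have h5 : m + 1 ≤ n := le_trans (by have := hN2 (m+1); omega) hcc
        have h7 := Nat.le_findGreatest (P := fun j => Nn j ≤ n) h5 hcc
        rw [← hm_def] at h7
        omega
      obtain ⟨hBCm, hwinm, hratm⟩ := hM m hm2
      have hn1 : (1:ℝ) < n := by
        have h6 : (2:ℕ) ≤ n := le_trans (by have := hN2 M; omega) hnN
        exact_mod_cast Nat.lt_of_lt_of_le one_lt_two h6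
      have hlogn : 0 < Real.log n := Real.log_pos hn1
      have hlogNm_nonneg : 0 ≤ Real.log (Nn m) := Real.log_nonneg (hN1 m)
      have hm1' : (Nn m : ℝ) ≤ n := by exact_mod_cast hm1
      have hm3' : (n : ℝ) ≤ Nn (m+1) := by exact_mod_cast hm3.le
      have hlogmono : Real.log (Nn m) ≤ Real.log n := Real.log_le_log (hNpos m) hm1'
      have hkb : kseq n ≤ ⌊(β+ε) * Real.log (Nn m)⌋₊ := by
        apply Nat.le_floor
        calc (kseq n : ℝ) ≤ (β + ε/2) * Real.log n := hN₀ n hnN₀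
          _ ≤ (β + ε/2) * Real.log (Nn (m+1)) := by
              refine mul_le_mul_of_nonneg_left ?_ (by linarith)
              exact Real.log_le_log (by linarith) hm3'
          _ ≤ (β + ε) * Real.log (Nn m) := hwinm
      have hU3 : U (Nn m) ⌊(β+ε)*Real.log (Nn m)⌋₊ ω ≤ Real.log (Nn m) / Nn m := by
        rw [le_div_iff₀ (hNpos m)]
        linarith [hBCm]
      have hUchain : U n (kseq n) ω ≤ Real.log (Nn m) / Nn m :=
        le_trans (monoK n hkb) (le_trans (monoN _ hm1) hU3)
      have hdivnn : (0:ℝ) ≤ Real.log (Nn m) / Nn m :=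
        div_nonneg hlogNm_nonneg (hNpos m).le
      have key : (n:ℝ) * U n (kseq n) ω ≤ r * Real.log n := by
        calc (n:ℝ) * U n (kseq n) ω ≤ (n:ℝ) * (Real.log (Nn m) / Nn m) :=
              mul_le_mul_of_nonneg_left hUchain (Nat.cast_nonneg n)
          _ ≤ (Nn (m+1) : ℝ) * (Real.log (Nn m) / Nn m) :=
              mul_le_mul_of_nonneg_right hm3' hdivnn
          _ ≤ (r * Nn m) * (Real.log (Nn m) / Nn m) :=
              mul_le_mul_of_nonneg_right hratm hdivnn
          _ = r * Real.log (Nn m) := by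
              field_simp [(hNpos m).ne']
          _ ≤ r * Real.log n := mul_le_mul_of_nonneg_left hlogmono (by linarith)
      rw [div_le_iff₀ hlogn]
      exact key
    have hle : Filter.limsup
        (fun n : ℕ => (((n : ℝ) * U n (kseq n) ω / Real.log n : ℝ) : EReal)) atTop
        ≤ (r : EReal) := by
      refine limsup_le_of_le (by isBoundedDefault) ?_
      exact hev.mono fun n hn => by exact_mod_cast hn
    exact absurd (lt_of_lt_of_le hrl hle) (lt_irrefl _)
  · -- part (b)
    intro hεβ hb
    have hwin' : ∀ᶠ m in atTop,
        (β - ε) * Real.log (Nn (m+1)) ≤ (β - ε/2) * Real.log (Nn m) := by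
      have h1 : ∀ᶠ m in atTop,
          (β - ε) * (Real.log (Nn (m+1)) - Real.log (Nn m)) ≤ 1 := by
        have := (hlogdiff.const_mul (β - ε)).eventually
          (eventually_le_nhds (show (β - ε)*0 < 1 by norm_num))
        simpa using this
      filter_upwards [h1, h2mul] with m h1 h2
      nlinarith [h1, h2]
    have hklog_lo : ∀ᶠ n : ℕ in atTop, (β - ε/2) * Real.log n ≤ (kseq n : ℝ) := by
      have h1 := hk.eventually (eventually_ge_nhds (show β - ε/2 < β by linarith))
      filter_upwards [h1, eventually_ge_atTop 2] with n h1 h2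
      have hlog : 0 < Real.log n := Real.log_pos (by exact_mod_cast Nat.lt_of_lt_of_le one_lt_two h2)
      exact (le_div_iff₀ hlog).1 h1
    have hBC : ∀ᵐ ω ∂P, ∀ᶠ m in atTop,
        Real.log (Nn m) < (Nn m : ℝ) * U (Nn m) ⌈(β-ε) * Real.log (Nn m)⌉₊ ω := by
      filter_upwards [bc_aux P
        (fun m => {ω : Ω | (Nn m : ℝ) * U (Nn m) ⌈(β - ε) * Real.log (Nn m)⌉₊ ω ≤ Real.log (Nn m)})
        _ hsummable (hNtendsto.eventually hb)] with ω hω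
      filter_upwards [hω] with m hm
      simpa using not_le.1 hm
    filter_upwards [hmono, hBC] with ω hmω hBCω
    have monoN : ∀ (k : ℕ) {a b : ℕ}, a ≤ b → U b k ω ≤ U a k ω := by
      intro k a b hab
      induction b, hab using Nat.le_induction with
      | base => exact le_rfl
      | succ b hb ih => exact le_trans (hmω b k).1 ih
    have monoK : ∀ (n : ℕ) {a b : ℕ}, a ≤ b → U n a ω ≤ U n b ω := by
      intro n a b hab
      induction b, hab using Nat.le_induction with
      | base => exact le_rfl
      | succ b hb ih => exact le_trans ih (hmω n b).2
    by_contra hcon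
    push_neg at hcon
    obtain ⟨z, hz1, hz2⟩ := EReal.exists_between_coe_real hcon
    have hz2' : z < 1 := by exact_mod_cast hz2
    set r : ℝ := max z (1/2) with hr_def
    have hr0 : (0:ℝ) < r := lt_of_lt_of_le (by norm_num) (le_max_right _ _)
    have hr1 : r < 1 := max_lt hz2' (by norm_num)
    have hzr : (z : EReal) ≤ (r : EReal) := by exact_mod_cast le_max_left z (1/2)
    have hratr : ∀ᶠ m in atTop, r * (Nn (m+1) : ℝ) ≤ Nn m := by
      have hrinv : 1 < r⁻¹ := (one_lt_inv₀ hr0).2 hr1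
      have h1 := hratio.eventually (eventually_le_nhds hrinv)
      filter_upwards [h1] with m h1
      rw [div_le_iff₀ (hNpos m)] at h1
      calc r * (Nn (m+1) : ℝ) ≤ r * (r⁻¹ * Nn m) :=
            mul_le_mul_of_nonneg_left h1 hr0.le
        _ = Nn m := by field_simp
    have hev : ∀ᶠ n : ℕ in atTop, r ≤ ((n:ℝ) * U n (kseq n) ω / Real.log n) := by
      obtain ⟨M, hM⟩ := eventually_atTop.1 (hBCω.and (hwin'.and hratr))
      obtain ⟨N₀, hN₀⟩ := eventually_atTop.1 hklog_lo
      rw [eventually_atTop]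
      refine ⟨max (Nn M) N₀, fun n hn => ?_⟩
      have hnN : Nn M ≤ n := le_trans (le_max_left _ _) hn
      have hnN₀ : N₀ ≤ n := le_trans (le_max_right _ _) hn
      have hMn : M ≤ n := le_trans (by have := hN2 M; omega) hnN
      set m := Nat.findGreatest (fun j => Nn j ≤ n) n with hm_def
      have hm1 : Nn m ≤ n := Nat.findGreatest_spec (P := fun j => Nn j ≤ n) hMn hnN
      have hm2 : M ≤ m := Nat.le_findGreatest (P := fun j => Nn j ≤ n) hMn hnN
      have hm3 : n < Nn (m+1) := by
        by_contra hcc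
        push_neg at hcc
        have h5 : m + 1 ≤ n := le_trans (by have := hN2 (m+1); omega) hcc
        have h7 := Nat.le_findGreatest (P := fun j => Nn j ≤ n) h5 hcc
        rw [← hm_def] at h7
        omega
      obtain ⟨hBCm, hwinm, hratm⟩ := hM m hm2
      have hBCm1 : Real.log (Nn (m+1)) <
          (Nn (m+1) : ℝ) * U (Nn (m+1)) ⌈(β-ε) * Real.log (Nn (m+1))⌉₊ ω :=
        (hM (m+1) (by omega)).1
      have hn1 : (1:ℝ) < n := by
        have h6 : (2:ℕ) ≤ n := le_trans (by have := hN2 M; omega) hnN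
        exact_mod_cast Nat.lt_of_lt_of_le one_lt_two h6
      have hlogn : 0 < Real.log n := Real.log_pos hn1
      have hlogNm1_nonneg : 0 ≤ Real.log (Nn (m+1)) := Real.log_nonneg (hN1 (m+1))
      have hm1' : (Nn m : ℝ) ≤ n := by exact_mod_cast hm1
      have hm3' : (n : ℝ) ≤ Nn (m+1) := by exact_mod_cast hm3.le
      have hlogmono : Real.log n ≤ Real.log (Nn (m+1)) :=
        Real.log_le_log (by linarith) hm3'
      have hkb : ⌈(β-ε) * Real.log (Nn (m+1))⌉₊ ≤ kseq n := by
        rw [Nat.ceil_le]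
        calc (β-ε) * Real.log (Nn (m+1)) ≤ (β - ε/2) * Real.log (Nn m) := hwinm
          _ ≤ (β - ε/2) * Real.log n := by
              refine mul_le_mul_of_nonneg_left ?_ (by linarith)
              exact Real.log_le_log (hNpos m) hm1'
          _ ≤ (kseq n : ℝ) := hN₀ n hnN₀
      have hU3 : Real.log (Nn (m+1)) / Nn (m+1) ≤
          U (Nn (m+1)) ⌈(β-ε)*Real.log (Nn (m+1))⌉₊ ω := by
        rw [div_le_iff₀ (hNpos (m+1))]
        linarith [hBCm1]
      have hUchain : Real.log (Nn (m+1)) / Nn (m+1) ≤ U n (kseq n) ω :=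
        le_trans hU3 (le_trans (monoN _ hm3.le) (monoK n hkb))
      have hdivnn : (0:ℝ) ≤ Real.log (Nn (m+1)) / Nn (m+1) :=
        div_nonneg hlogNm1_nonneg (hNpos (m+1)).le
      have key : r * Real.log n ≤ (n:ℝ) * U n (kseq n) ω := by
        calc r * Real.log n ≤ r * Real.log (Nn (m+1)) :=
              mul_le_mul_of_nonneg_left hlogmono hr0.le
          _ = (r * Nn (m+1)) * (Real.log (Nn (m+1)) / Nn (m+1)) := by
              field_simp [(hNpos (m+1)).ne']
          _ ≤ (Nn m : ℝ) * (Real.log (Nn (m+1)) / Nn (m+1)) :=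
              mul_le_mul_of_nonneg_right hratm hdivnn
          _ ≤ (n : ℝ) * (Real.log (Nn (m+1)) / Nn (m+1)) :=
              mul_le_mul_of_nonneg_right hm1' hdivnn
          _ ≤ (n:ℝ) * U n (kseq n) ω :=
              mul_le_mul_of_nonneg_left hUchain (Nat.cast_nonneg n)
      rw [le_div_iff₀ hlogn]
      exact key
    have hle : (r : EReal) ≤ Filter.liminf
        (fun n : ℕ => (((n : ℝ) * U n (kseq n) ω / Real.log n : ℝ) : EReal)) atTop := by
      refine le_liminf_of_le (by isBoundedDefault) ?_
      exact hev.mono fun n hn => by exact_mod_cast hn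
    exact absurd (lt_of_le_of_lt (hzr.trans hle) hz1) (lt_irrefl _)
end
end

section
/- Let d ≥ 1, let A ⊂ ℝ^d be compact, let μ be a Borel probability measure with μ(A) = 1 admitting a Lebesgue density f, and let B ⊆ A be Riemann measurable with μ(B) > 0. Set f_0 := ess inf_{x∈B} f(x) and let α > f_0. Then liminf_{r→0+} r^d·ν(B, r, α·θ_d·r^d) > 0; that is, there exist c > 0 and r_0 > 0 such that ν(B,r,α·θ_d·r^d) ≥ c·r^{−d} for all 0 < r < r_0. -/
open MeasureTheory Metric Filter Topology ENNReal

noncomputable section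

/-- `θ_d`, the volume of the unit ball in `ℝ^d`. -/
def ballVol (d : ℕ) : ℝ := Real.pi ^ ((d : ℝ) / 2) / Real.Gamma (1 + (d : ℝ) / 2)

/-- The packing number `ν(B, r, a')`: the largest number of pairwise disjoint closed balls of
radius `r` centred at points of `B`, each of `μ`-measure at most `a'`. -/
def packNum {d : ℕ} (μ : Measure (EuclideanSpace ℝ (Fin d)))
    (B : Set (EuclideanSpace ℝ (Fin d))) (r a' : ℝ) : ℕ :=
  sSup {m : ℕ | ∃ s : Finset (EuclideanSpace ℝ (Fin d)), s.card = m ∧ ↑s ⊆ B ∧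
    (↑s : Set (EuclideanSpace ℝ (Fin d))).Pairwise
      (fun x y => Disjoint (closedBall x r) (closedBall y r)) ∧
    ∀ x ∈ s, μ (closedBall x r) ≤ ENNReal.ofReal a'}

lemma ballVol_pos (d : ℕ) : 0 < ballVol d := by
  apply div_pos (Real.rpow_pos_of_pos Real.pi_pos _)
  apply Real.Gamma_pos_of_pos
  positivity

lemma volume_closedBall_eq {d : ℕ} (hd : 1 ≤ d) (x : EuclideanSpace ℝ (Fin d)) {r : ℝ}
    (hr : 0 ≤ r) : volume (closedBall x r) = ENNReal.ofReal (ballVol d * r ^ d) := by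
  have : Nonempty (Fin d) := ⟨⟨0, hd⟩⟩
  rw [EuclideanSpace.volume_closedBall (Fin d) x r]
  have hsq : Real.sqrt Real.pi ^ (Fintype.card (Fin d)) = Real.pi ^ ((d : ℝ) / 2) := by
    rw [Fintype.card_fin, Real.sqrt_eq_rpow, ← Real.rpow_natCast (Real.pi ^ ((1:ℝ)/2)) d,
      ← Real.rpow_mul Real.pi_pos.le]
    congr 1
    ring
  have hc : Real.sqrt Real.pi ^ (Fintype.card (Fin d)) /
      Real.Gamma ((Fintype.card (Fin d) : ℝ) / 2 + 1) = ballVol d := by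
    rw [hsq, ballVol, Fintype.card_fin, add_comm]
  rw [hc, ← ENNReal.ofReal_pow hr, ← ENNReal.ofReal_mul (by positivity), Fintype.card_fin,
    mul_comm]

theorem packing_number_lower_bound
    {d : ℕ} (hd : 1 ≤ d)
    (A B : Set (EuclideanSpace ℝ (Fin d))) (hAcompact : IsCompact A)
    (μ : Measure (EuclideanSpace ℝ (Fin d))) [IsProbabilityMeasure μ] (hμA : μ A = 1)
    (f : EuclideanSpace ℝ (Fin d) → ℝ) (hfnonneg : ∀ x, 0 ≤ f x)
    (hdens : μ = volume.withDensity (fun x => ENNReal.ofReal (f x)))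
    (hBA : B ⊆ A) (hBRiemann : volume (frontier B) = 0) (hμB : 0 < μ B)
    (f₀ : ℝ) (hf₀ : f₀ = essInf f (volume.restrict B))
    (α : ℝ) (hα : f₀ < α) :
    ∃ c > (0 : ℝ), ∃ r₀ > (0 : ℝ), ∀ r : ℝ, 0 < r → r < r₀ →
      c * r ^ (-(d : ℝ)) ≤ (packNum μ B r (α * ballVol d * r ^ d) : ℝ) := by
  classical
  have hac : μ ≪ volume := hdens ▸ withDensity_absolutelyContinuous volume _
  have hvolB : volume B ≠ 0 := fun h => absurd (hac h) hμB.ne'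
  set U : Set (EuclideanSpace ℝ (Fin d)) := interior B with hUdef
  have hUmeas : MeasurableSet U := isOpen_interior.measurableSet
  have hBU : B =ᵐ[volume] U := by
    rw [MeasureTheory.ae_eq_set]
    constructor
    · refine measure_mono_null ?_ hBRiemann
      exact fun x hx => ⟨subset_closure hx.1, hx.2⟩
    · simp [hUdef, Set.diff_eq_empty.2 interior_subset]
  have hvolU : volume U ≠ 0 := by rwa [← measure_congr hBU]
  have hUA : U ⊆ A := interior_subset.trans hBA
  have hvolUtop : volume U ≠ ∞ :=
    ((measure_mono hUA).trans_lt hAcompact.measure_lt_top).ne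
  -- the Radon–Nikodym derivative
  set g := μ.rnDeriv volume with hgdef
  have hgmeas : Measurable g := Measure.measurable_rnDeriv μ volume
  have hgdens : volume.withDensity g = μ := Measure.withDensity_rnDeriv_eq μ volume hac
  -- essInf facts
  set SS : Set ℝ := {a : ℝ | (volume.restrict B) {x | f x < a} = 0} with hSSdef
  have hrBuniv : (volume.restrict B) Set.univ ≠ 0 := by
    rw [Measure.restrict_apply_univ]; exact hvolB
  have hSSbdd : BddAbove SS := by
    by_contra hnb
    apply hrBuniv
    have huniv : (Set.univ : Set (EuclideanSpace ℝ (Fin d))) = ⋃ n : ℕ, {x | f x < n} := by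
      ext x; simp only [Set.mem_univ, Set.mem_iUnion, Set.mem_setOf_eq, true_iff]
      obtain ⟨n, hn⟩ := exists_nat_gt (f x); exact ⟨n, hn⟩
    rw [huniv]
    refine measure_iUnion_null fun n => ?_
    obtain ⟨a, haSS, hna⟩ := not_bddAbove_iff.1 hnb (n : ℝ)
    exact measure_mono_null (fun x hx => lt_trans hx hna) haSS
  have hf₀SS : f₀ = sSup SS := by rw [hf₀, essInf_eq_sSup]
  have hf₀nonneg : 0 ≤ f₀ := by
    rw [hf₀SS]
    refine le_csSup hSSbdd ?_
    have : {x | f x < (0:ℝ)} = ∅ := by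
      ext x; simp [not_lt.2 (hfnonneg x)]
    simp [hSSdef, this]
  have hα0 : 0 < α := lt_of_le_of_lt hf₀nonneg hα
  set β := (f₀ + α) / 2 with hβdef
  have hβ1 : f₀ < β := by rw [hβdef]; linarith
  have hβ2 : β < α := by rw [hβdef]; linarith
  have hβ0 : 0 < β := lt_of_le_of_lt hf₀nonneg hβ1
  have hSβ : (volume.restrict B) {x | f x < β} ≠ 0 := by
    intro h0
    exact absurd (hf₀SS ▸ le_csSup hSSbdd h0) (not_le.2 hβ1)
  -- the set where the density is < α has positive volume inside U
  set Vα : Set (EuclideanSpace ℝ (Fin d)) := U ∩ {x | g x < ENNReal.ofReal α} with hVαdef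
  have hvolV : volume Vα ≠ 0 := by
    intro h0
    set S : Set (EuclideanSpace ℝ (Fin d)) := {x | f x < β} with hSdef
    have hSU : volume (S ∩ U) ≠ 0 := by
      rw [← Measure.restrict_apply' hUmeas, ← Measure.restrict_congr_set hBU]
      exact hSβ
    set T : Set (EuclideanSpace ℝ (Fin d)) := toMeasurable volume (S ∩ U) ∩ U with hTdef
    have hTmeas : MeasurableSet T :=
      (measurableSet_toMeasurable _ _).inter hUmeas
    have hSUT : S ∩ U ⊆ T := fun x hx => ⟨subset_toMeasurable _ _ hx, hx.2⟩
    have hTU : T ⊆ U := Set.inter_subset_right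
    have hTvol : volume T = volume (S ∩ U) :=
      le_antisymm (le_trans (measure_mono Set.inter_subset_left)
        (measure_toMeasurable _).le) (measure_mono hSUT)
    have hT0 : volume T ≠ 0 := by rw [hTvol]; exact hSU
    have hTfin : volume T ≠ ∞ := ((measure_mono hTU).trans_lt hvolUtop.lt_top).ne
    -- hull property
    have hhull : ∀ M : Set (EuclideanSpace ℝ (Fin d)), MeasurableSet M → M ⊆ T →
        M ∩ (S ∩ U) = ∅ → volume M = 0 := by
      intro M hMmeas hMT hMS
      have h1 : volume T ≤ volume (T \ M) := by
        rw [hTvol]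
        refine measure_mono (Set.subset_diff.2 ⟨hSUT, ?_⟩)
        rw [Set.disjoint_iff_inter_eq_empty, Set.inter_comm]; exact hMS
      have h2 : volume M + volume (T \ M) = volume T := by
        have := measure_inter_add_diff (μ := (volume : Measure (EuclideanSpace ℝ (Fin d)))) T hMmeas
        rwa [Set.inter_eq_self_of_subset_right hMT] at this
      have hTMfin : volume (T \ M) ≠ ∞ :=
        ((measure_mono Set.diff_subset).trans_lt hTfin.lt_top).ne
      have : volume M + volume (T \ M) ≤ 0 + volume (T \ M) := by
        rw [zero_add]; exact h2.le.trans h1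
      simpa using (ENNReal.add_le_add_iff_right hTMfin).1 this
    -- upper bound for μ T
    have hμT : μ T = ∫⁻ x in T, ENNReal.ofReal (f x) ∂volume := by
      rw [hdens]; exact withDensity_apply _ hTmeas
    obtain ⟨h, hhm, hhle, hheq⟩ :=
      exists_measurable_le_lintegral_eq (volume.restrict T) (fun x => ENNReal.ofReal (f x))
    set M : Set (EuclideanSpace ℝ (Fin d)) := T ∩ {x | ENNReal.ofReal β ≤ h x} with hMdef
    have hMmeas : MeasurableSet M := hTmeas.inter (measurableSet_le measurable_const hhm)
    have hM0 : volume M = 0 := by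
      refine hhull M hMmeas Set.inter_subset_left ?_
      rw [Set.eq_empty_iff_forall_notMem]
      rintro x ⟨⟨-, hxh⟩, hxS, -⟩
      exact absurd hxh
        (not_le.2 (lt_of_le_of_lt (hhle x) ((ENNReal.ofReal_lt_ofReal_iff hβ0).2 hxS)))
    have hsplit : μ T ≤ ENNReal.ofReal β * volume T := by
      rw [hμT, hheq]
      have hTsplit : (T \ M) ∪ M = T := Set.diff_union_of_subset Set.inter_subset_left
      calc ∫⁻ x, h x ∂(volume.restrict T) = ∫⁻ x in (T \ M) ∪ M, h x ∂volume := by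
            rw [hTsplit]
        _ = ∫⁻ x in T \ M, h x ∂volume + ∫⁻ x in M, h x ∂volume :=
            lintegral_union hMmeas disjoint_sdiff_self_left
        _ = ∫⁻ x in T \ M, h x ∂volume := by
            rw [setLIntegral_measure_zero _ _ hM0, add_zero]
        _ ≤ ∫⁻ _ in T \ M, ENNReal.ofReal β ∂volume := by
            refine setLIntegral_mono' (hTmeas.diff hMmeas) fun x hx => ?_
            by_contra hcon
            exact hx.2 ⟨hx.1, (not_le.1 hcon).le⟩
        _ = ENNReal.ofReal β * volume (T \ M) := by rw [setLIntegral_const]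
        _ ≤ ENNReal.ofReal β * volume T :=
            mul_le_mul_right (measure_mono Set.diff_subset) _
    -- lower bound for μ T
    have hlow : ENNReal.ofReal α * volume T ≤ μ T := by
      rw [← hgdens, withDensity_apply g hTmeas]
      calc ENNReal.ofReal α * volume T = ENNReal.ofReal α * volume (T \ Vα) := by
            rw [measure_diff_null h0]
        _ = ∫⁻ _ in T \ Vα, ENNReal.ofReal α ∂volume := by rw [setLIntegral_const]
        _ ≤ ∫⁻ x in T \ Vα, g x ∂volume := by
            refine setLIntegral_mono' ((hTmeas.diff
              (hUmeas.inter (hgmeas measurableSet_Iio)))) fun x hx => ?_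
            by_contra hcon
            exact hx.2 ⟨hTU hx.1, not_le.1 hcon⟩
        _ ≤ ∫⁻ x in T, g x ∂volume := lintegral_mono_set Set.diff_subset
    have hαβ : ENNReal.ofReal α ≤ ENNReal.ofReal β := by
      have := hlow.trans hsplit
      exact (ENNReal.mul_le_mul_iff_left hT0 hTfin).1 this
    have : α ≤ β := (ENNReal.ofReal_le_ofReal_iff hβ0.le).1 hαβ
    exact absurd this (not_le.2 hβ2)
  -- a.e. differentiation
  have hae : ∀ᵐ x ∂volume, x ∈ Vα → ∃ n : ℕ, ∀ r : ℝ, 0 < r → r ≤ 1 / ((n : ℝ) + 1) →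
      μ (closedBall x r) ≤ ENNReal.ofReal (α * ballVol d * r ^ d) := by
    filter_upwards [Besicovitch.ae_tendsto_rnDeriv μ volume] with x hx hxV
    have hlt : g x < ENNReal.ofReal α := hxV.2
    have hev : ∀ᶠ r in 𝓝[>] (0:ℝ),
        μ (closedBall x r) / volume (closedBall x r) < ENNReal.ofReal α :=
      hx (Iio_mem_nhds hlt)
    obtain ⟨ε, hε, hsub⟩ := mem_nhdsGT_iff_exists_Ioc_subset.1 hev
    obtain ⟨n, hn⟩ := exists_nat_one_div_lt (Set.mem_Ioi.1 hε)
    refine ⟨n, fun r hr hrn => ?_⟩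
    have hrε : r ∈ Set.Ioc (0:ℝ) ε := ⟨hr, hrn.trans hn.le⟩
    have hratio : μ (closedBall x r) / volume (closedBall x r) < ENNReal.ofReal α := hsub hrε
    have hball0 : volume (closedBall x r) ≠ 0 := (measure_closedBall_pos volume x hr).ne'
    have hballtop : volume (closedBall x r) ≠ ∞ := measure_closedBall_lt_top.ne
    have h1 : μ (closedBall x r) < ENNReal.ofReal α * volume (closedBall x r) :=
      (ENNReal.div_lt_iff (Or.inl hball0) (Or.inl hballtop)).1 hratio
    rw [volume_closedBall_eq hd x hr.le, ← ENNReal.ofReal_mul hα0.le, ← mul_assoc] at h1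
    exact h1.le
  -- pick a good n
  set Vn : ℕ → Set (EuclideanSpace ℝ (Fin d)) := fun n =>
    {x ∈ Vα | ∀ r : ℝ, 0 < r → r ≤ 1 / ((n : ℝ) + 1) →
      μ (closedBall x r) ≤ ENNReal.ofReal (α * ballVol d * r ^ d)} with hVndef
  obtain ⟨n, hVn0⟩ : ∃ n : ℕ, volume (Vn n) ≠ 0 := by
    by_contra hall
    push_neg at hall
    apply hvolV
    have hbad : volume {x | ¬ (x ∈ Vα → ∃ n : ℕ, ∀ r : ℝ, 0 < r → r ≤ 1 / ((n : ℝ) + 1) →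
        μ (closedBall x r) ≤ ENNReal.ofReal (α * ballVol d * r ^ d))} = 0 := hae
    have hcover : Vα ⊆ {x | ¬ (x ∈ Vα → ∃ n : ℕ, ∀ r : ℝ, 0 < r → r ≤ 1 / ((n : ℝ) + 1) →
        μ (closedBall x r) ≤ ENNReal.ofReal (α * ballVol d * r ^ d))} ∪ ⋃ n, Vn n := by
      intro x hx
      by_cases hgood : ∃ n : ℕ, ∀ r : ℝ, 0 < r → r ≤ 1 / ((n : ℝ) + 1) →
          μ (closedBall x r) ≤ ENNReal.ofReal (α * ballVol d * r ^ d)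
      · obtain ⟨n, hn⟩ := hgood
        exact Or.inr (Set.mem_iUnion.2 ⟨n, hx, hn⟩)
      · exact Or.inl (fun himp => hgood (himp hx))
    have : volume Vα ≤ 0 := by
      refine le_trans (measure_mono hcover) (le_trans (measure_union_le _ _) ?_)
      rw [hbad, zero_add]
      exact le_trans (measure_iUnion_le _) (by simp [hall])
    simpa using this
  set W := Vn n with hWdef
  have hWU : W ⊆ U := fun x hx => hx.1.1
  have hWB : W ⊆ B := fun x hx => interior_subset (hWU hx)
  have hWfin : volume W ≠ ∞ := ((measure_mono hWU).trans_lt hvolUtop.lt_top).ne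
  obtain ⟨R, hR⟩ : ∃ R, A ⊆ closedBall 0 R := hAcompact.isBounded.subset_closedBall 0
  -- generic cardinality bound for packings
  have hcardbound : ∀ r : ℝ, 0 < r → ∀ s : Finset (EuclideanSpace ℝ (Fin d)), ↑s ⊆ B →
      (↑s : Set (EuclideanSpace ℝ (Fin d))).Pairwise
        (fun x y => Disjoint (closedBall x r) (closedBall y r)) →
      s.card ≤ Nat.ceil ((volume (closedBall (0 : EuclideanSpace ℝ (Fin d)) (R + r)) /
        ENNReal.ofReal (ballVol d * r ^ d)).toReal) := by
    intro r hr s hsB hsep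
    have hb0 : ENNReal.ofReal (ballVol d * r ^ d) ≠ 0 := by
      rw [Ne, ENNReal.ofReal_eq_zero, not_le]
      exact mul_pos (ballVol_pos d) (pow_pos hr d)
    have hbig : volume (closedBall (0 : EuclideanSpace ℝ (Fin d)) (R + r)) ≠ ∞ :=
      measure_closedBall_lt_top.ne
    have hsum : (s.card : ℝ≥0∞) * ENNReal.ofReal (ballVol d * r ^ d) ≤
        volume (closedBall (0 : EuclideanSpace ℝ (Fin d)) (R + r)) := by
      have heq : volume (⋃ x ∈ s, closedBall x r) =
          ∑ x ∈ s, volume (closedBall x r) :=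
        measure_biUnion_finset hsep fun x _ => measurableSet_closedBall
      have hsum' : ∑ x ∈ s, volume (closedBall x r) =
          (s.card : ℝ≥0∞) * ENNReal.ofReal (ballVol d * r ^ d) := by
        rw [Finset.sum_congr rfl fun x _ => volume_closedBall_eq hd x hr.le,
          Finset.sum_const, nsmul_eq_mul]
      rw [← hsum', ← heq]
      refine measure_mono (Set.iUnion₂_subset fun x hx => ?_)
      refine closedBall_subset_closedBall' ?_
      have : dist x 0 ≤ R := hR (hBA (hsB hx))
      linarith
    have hle : (s.card : ℝ≥0∞) ≤
        volume (closedBall (0 : EuclideanSpace ℝ (Fin d)) (R + r)) /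
          ENNReal.ofReal (ballVol d * r ^ d) :=
      (ENNReal.le_div_iff_mul_le (Or.inl hb0) (Or.inr hbig)).2 hsum
    have hdivfin : volume (closedBall (0 : EuclideanSpace ℝ (Fin d)) (R + r)) /
        ENNReal.ofReal (ballVol d * r ^ d) ≠ ∞ :=
      (ENNReal.div_lt_top hbig hb0).ne
    have h2 := ENNReal.toReal_mono hdivfin hle
    rw [ENNReal.toReal_natCast] at h2
    exact_mod_cast h2.trans (Nat.le_ceil _)
  refine ⟨(volume W).toReal / (ballVol d * 2 ^ d),
    div_pos (ENNReal.toReal_pos hVn0 hWfin) (mul_pos (ballVol_pos d) (by positivity)),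
    1 / ((n : ℝ) + 1), by positivity, fun r hr hrn => ?_⟩
  -- maximal separated set
  set Sep : Set ℕ := {m : ℕ | ∃ s : Finset (EuclideanSpace ℝ (Fin d)), s.card = m ∧
    ↑s ⊆ W ∧ (↑s : Set (EuclideanSpace ℝ (Fin d))).Pairwise
      (fun x y => 2 * r < dist x y)} with hSepdef
  have hsep_disj : ∀ s : Finset (EuclideanSpace ℝ (Fin d)),
      (↑s : Set (EuclideanSpace ℝ (Fin d))).Pairwise (fun x y => 2 * r < dist x y) →
      (↑s : Set (EuclideanSpace ℝ (Fin d))).Pairwise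
        (fun x y => Disjoint (closedBall x r) (closedBall y r)) := by
    intro s hs x hx y hy hxy
    exact closedBall_disjoint_closedBall (by have := hs hx hy hxy; linarith)
  have hSepBdd : BddAbove Sep := by
    refine ⟨Nat.ceil ((volume (closedBall (0 : EuclideanSpace ℝ (Fin d)) (R + r)) /
      ENNReal.ofReal (ballVol d * r ^ d)).toReal), fun m hm => ?_⟩
    obtain ⟨s, hcard, hsW, hsep⟩ := hm
    exact hcard ▸ hcardbound r hr s (fun x hx => hWB (hsW hx)) (hsep_disj s hsep)
  have hSepne : Sep.Nonempty := ⟨0, ∅, by simp⟩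
  set m := sSup Sep with hmdef
  obtain ⟨s, hcard, hsW, hsep⟩ := Nat.sSup_mem hSepne hSepBdd
  -- maximality: W is covered by balls of radius 2r
  have hcover : W ⊆ ⋃ x ∈ s, closedBall x (2 * r) := by
    intro y hy
    by_contra hnot
    have hfar : ∀ x ∈ s, 2 * r < dist y x := by
      intro x hx
      by_contra hle
      exact hnot (Set.mem_biUnion hx (mem_closedBall.2 (not_lt.1 hle)))
    have hys : y ∉ s := by
      intro hys
      have := hfar y hys
      rw [dist_self] at this
      linarith
    have hmem : (s.card + 1 : ℕ) ∈ Sep := by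
      refine ⟨insert y s, by rw [Finset.card_insert_of_notMem hys], ?_, ?_⟩
      · rw [Finset.coe_insert]
        exact Set.insert_subset hy hsW
      · rw [Finset.coe_insert]
        haveI : Std.Symm (fun a b : EuclideanSpace ℝ (Fin d) => 2 * r < dist a b) :=
          ⟨fun a b hab => by rwa [dist_comm] at hab⟩
        refine (Set.pairwise_insert_of_symm).2 ⟨hsep, fun x hx _ => ?_⟩
        exact hfar x hx
    have h2 := le_csSup hSepBdd hmem
    rw [← hcard] at h2
    omega
  -- m belongs to the packing set
  have hpackBdd : BddAbove {m : ℕ | ∃ s : Finset (EuclideanSpace ℝ (Fin d)), s.card = m ∧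
      ↑s ⊆ B ∧ (↑s : Set (EuclideanSpace ℝ (Fin d))).Pairwise
        (fun x y => Disjoint (closedBall x r) (closedBall y r)) ∧
      ∀ x ∈ s, μ (closedBall x r) ≤ ENNReal.ofReal (α * ballVol d * r ^ d)} := by
    refine ⟨Nat.ceil ((volume (closedBall (0 : EuclideanSpace ℝ (Fin d)) (R + r)) /
      ENNReal.ofReal (ballVol d * r ^ d)).toReal), fun k hk => ?_⟩
    obtain ⟨t, hcard', htB, hdisj, _⟩ := hk
    exact hcard' ▸ hcardbound r hr t htB hdisj
  have hmmem : m ∈ {m : ℕ | ∃ s : Finset (EuclideanSpace ℝ (Fin d)), s.card = m ∧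
      ↑s ⊆ B ∧ (↑s : Set (EuclideanSpace ℝ (Fin d))).Pairwise
        (fun x y => Disjoint (closedBall x r) (closedBall y r)) ∧
      ∀ x ∈ s, μ (closedBall x r) ≤ ENNReal.ofReal (α * ballVol d * r ^ d)} := by
    refine ⟨s, hcard, fun x hx => hWB (hsW hx), hsep_disj s hsep, fun x hx => ?_⟩
    exact (hsW hx).2 r hr hrn.le
  have hpack : m ≤ packNum μ B r (α * ballVol d * r ^ d) := le_csSup hpackBdd hmmem
  -- volume estimate: vol W ≤ m * vol(ball 2r)
  have hvolest : volume W ≤ (m : ℝ≥0∞) * ENNReal.ofReal (ballVol d * (2 * r) ^ d) := by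
    refine le_trans (measure_mono hcover) (le_trans (measure_biUnion_finset_le s _) ?_)
    rw [Finset.sum_congr rfl fun x _ => volume_closedBall_eq hd x (by linarith),
      Finset.sum_const, nsmul_eq_mul, hcard]
  -- convert to real numbers
  have hrd : (0:ℝ) < r ^ d := pow_pos hr d
  have hreal : (volume W).toReal ≤ (m : ℝ) * (ballVol d * (2 * r) ^ d) := by
    have := ENNReal.toReal_mono (by
        refine ENNReal.mul_ne_top (by simp) ENNReal.ofReal_ne_top) hvolest
    rwa [ENNReal.toReal_mul, ENNReal.toReal_natCast,
      ENNReal.toReal_ofReal (le_of_lt (mul_pos (ballVol_pos d)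
        (pow_pos (by linarith) d)))] at this
  have hc2 : (volume W).toReal / (ballVol d * 2 ^ d) ≤ (m : ℝ) * r ^ d := by
    rw [div_le_iff₀ (mul_pos (ballVol_pos d) (by positivity))]
    calc (volume W).toReal ≤ (m : ℝ) * (ballVol d * (2 * r) ^ d) := hreal
      _ = (m : ℝ) * r ^ d * (ballVol d * 2 ^ d) := by ring
  rw [Real.rpow_neg hr.le, Real.rpow_natCast]
  rw [← div_eq_mul_inv, div_le_iff₀ hrd]
  calc (volume W).toReal / (ballVol d * 2 ^ d) ≤ (m : ℝ) * r ^ d := hc2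
    _ ≤ (packNum μ B r (α * ballVol d * r ^ d) : ℝ) * r ^ d := by
        have : (m : ℝ) ≤ (packNum μ B r (α * ballVol d * r ^ d) : ℝ) := by
          exact_mod_cast hpack
        nlinarith
end
end

section
/- Let d ≥ 1 and let A ⊂ ℝ^d be a nonempty compact set with nonempty topological boundary. Let χ ⊂ ℝ^d be a finite set of points and let k ∈ ℕ. Define R := inf{ r > 0 : every x ∈ A has at least k points of χ in the closed ball B(x,r) }, R̃ := inf{ r > 0 : every x ∈ A^{(r)} has at least k points of χ in B(x,r) }, and R₁ := inf{ r > 0 : every x ∈ A \ A^{(r)} has at least k points of χ in B(x,r) }, in each case with inf ∅ := +∞, where A^{(r)} := { x ∈ A : B(x,r) ⊆ interior(A) }. Then R = max(R̃, R₁). -/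
open MeasureTheory Metric Filter Topology

noncomputable section

/-- The infimum (in `[-∞,∞]`, so `+∞` for the empty set) of the set of positive radii
satisfying a given property. -/
def radiusInf (Q : ℝ → Prop) : EReal :=
  sInf {ρ : EReal | ∃ r : ℝ, ρ = (r : EReal) ∧ 0 < r ∧ Q r}

/-- The `r`-interior `A^{(r)}` of `A`. -/
def rInterior {d : ℕ} (A : Set (EuclideanSpace ℝ (Fin d))) (r : ℝ) :
    Set (EuclideanSpace ℝ (Fin d)) :=
  {x ∈ A | closedBall x r ⊆ interior A}

variable {d : ℕ}

lemma exists_boundary_ball {A : Set (EuclideanSpace ℝ (Fin d))} {x y : EuclideanSpace ℝ (Fin d)}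
    {r₁ r : ℝ} (hr₁ : 0 < r₁) (hx : closedBall x r₁ ⊆ interior A)
    (hy : y ∉ interior A) (hxy : dist x y ≤ r) :
    ∃ z, z ∈ A ∧ z ∉ rInterior A r₁ ∧ closedBall z r₁ ⊆ closedBall x r := by
  have hD : 0 < dist x y := by
    rcases eq_or_lt_of_le (dist_nonneg (x := x) (y := y)) with h | h
    · exact absurd (show y = x by rw [← dist_eq_zero, dist_comm]; exact h.symm) (fun he =>
        hy (he ▸ hx (mem_closedBall_self hr₁.le)))
    · exact h
  let γ : ℝ → EuclideanSpace ℝ (Fin d) := fun t => AffineMap.lineMap x y t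
  have hdist : ∀ t₁ t₂ : ℝ, dist (γ t₁) (γ t₂) = |t₁ - t₂| * dist x y := by
    intro t₁ t₂
    show dist (AffineMap.lineMap x y t₁) (AffineMap.lineMap x y t₂) = _
    rw [dist_lineMap_lineMap, Real.dist_eq]
  have hdist0 : ∀ t : ℝ, 0 ≤ t → dist (γ t) x = t * dist x y := by
    intro t ht
    have h := hdist t 0
    rw [show γ 0 = x from by simp [γ]] at h
    rw [h, sub_zero, abs_of_nonneg ht]
  have hγ0 : γ 0 = x := by simp [γ]
  have hγ1 : γ 1 = y := by simp [γ]
  set T : Set ℝ := {t ∈ Set.Icc (0:ℝ) 1 | γ t ∉ interior A} with hT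
  have hone : (1:ℝ) ∈ T := ⟨⟨zero_le_one, le_refl 1⟩, by rw [hγ1]; exact hy⟩
  have hTne : T.Nonempty := ⟨1, hone⟩
  have hTbdd : BddBelow T := ⟨0, fun t ht => ht.1.1⟩
  have hTclosed : IsClosed T := by
    have hc : Continuous γ :=
      (AffineMap.lineMap x y : ℝ →ᵃ[ℝ] _).continuous_of_finiteDimensional
    exact (isClosed_Icc.inter (isOpen_interior.isClosed_compl.preimage hc))
  obtain ⟨t₀, ht₀⟩ : ∃ t : ℝ, t = sInf T := ⟨_, rfl⟩
  have ht₀mem : t₀ ∈ T := ht₀ ▸ hTclosed.csInf_mem hTne hTbdd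
  have ht₀min : ∀ t ∈ T, t₀ ≤ t := fun t ht => ht₀ ▸ csInf_le hTbdd ht
  have ht₀0 : 0 ≤ t₀ := ht₀mem.1.1
  have ht₀1 : t₀ ≤ 1 := ht₀mem.1.2
  have hkey : r₁ < t₀ * dist x y := by
    by_contra h
    push_neg at h
    exact ht₀mem.2 (hx (by rw [mem_closedBall, hdist0 t₀ ht₀0]; exact h))
  obtain ⟨s, hs⟩ : ∃ s : ℝ, s = t₀ - r₁ / dist x y := ⟨_, rfl⟩
  have hq : r₁ / dist x y < t₀ := (div_lt_iff₀ hD).2 hkey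
  have hqpos : 0 < r₁ / dist x y := div_pos hr₁ hD
  have hs0 : 0 < s := by rw [hs]; linarith
  have hst₀ : s < t₀ := by rw [hs]; linarith
  have hsd : s * dist x y + r₁ = t₀ * dist x y := by
    rw [hs]; field_simp; ring
  refine ⟨γ s, ?_, ?_, ?_⟩
  · have : γ s ∈ interior A := by
      by_contra h
      exact absurd (ht₀min s ⟨⟨hs0.le, hst₀.le.trans ht₀1⟩, h⟩) (not_le.2 hst₀)
    exact interior_subset this
  · intro hmem
    apply ht₀mem.2
    apply hmem.2
    rw [mem_closedBall, hdist t₀ s, abs_of_nonneg (by linarith)]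
    nlinarith
  · intro w hw
    rw [mem_closedBall] at hw ⊢
    have h1 : dist w x ≤ dist w (γ s) + dist (γ s) x := dist_triangle _ _ _
    rw [hdist0 s hs0.le] at h1
    nlinarith [mul_le_mul_of_nonneg_right ht₀1 hD.le]

lemma ncard_mono_ball {χ : Finset (EuclideanSpace ℝ (Fin d))} {x : EuclideanSpace ℝ (Fin d)}
    {r₁ r₂ : ℝ} (h : r₁ ≤ r₂) {k : ℕ}
    (hk : k ≤ ((χ : Set (EuclideanSpace ℝ (Fin d))) ∩ closedBall x r₁).ncard) :
    k ≤ ((χ : Set (EuclideanSpace ℝ (Fin d))) ∩ closedBall x r₂).ncard := by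
  refine hk.trans (Set.ncard_le_ncard ?_ ?_)
  · exact Set.inter_subset_inter_right _ (closedBall_subset_closedBall h)
  · exact (χ.finite_toSet.inter_of_left _)

lemma mono_tilde {A : Set (EuclideanSpace ℝ (Fin d))} {χ : Finset (EuclideanSpace ℝ (Fin d))}
    {k : ℕ} {r₁ r₂ : ℝ} (h : r₁ ≤ r₂)
    (hQ : ∀ x ∈ rInterior A r₁,
      k ≤ ((χ : Set (EuclideanSpace ℝ (Fin d))) ∩ closedBall x r₁).ncard) :
    ∀ x ∈ rInterior A r₂,
      k ≤ ((χ : Set (EuclideanSpace ℝ (Fin d))) ∩ closedBall x r₂).ncard := by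
  intro x hx
  have hx1 : x ∈ rInterior A r₁ :=
    ⟨hx.1, (closedBall_subset_closedBall h).trans hx.2⟩
  exact ncard_mono_ball h (hQ x hx1)

lemma mono_one {A : Set (EuclideanSpace ℝ (Fin d))} {χ : Finset (EuclideanSpace ℝ (Fin d))}
    {k : ℕ} {r₁ r₂ : ℝ} (hr₁ : 0 < r₁) (h : r₁ ≤ r₂)
    (hQ : ∀ x ∈ A \ rInterior A r₁,
      k ≤ ((χ : Set (EuclideanSpace ℝ (Fin d))) ∩ closedBall x r₁).ncard) :
    ∀ x ∈ A \ rInterior A r₂,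
      k ≤ ((χ : Set (EuclideanSpace ℝ (Fin d))) ∩ closedBall x r₂).ncard := by
  intro x hx
  by_cases hx1 : x ∈ rInterior A r₁
  · -- x ∈ A^{(r₁)} \ A^{(r₂)}
    have hnot : ¬ closedBall x r₂ ⊆ interior A := fun hc => hx.2 ⟨hx.1, hc⟩
    obtain ⟨y, hy1, hy2⟩ := Set.not_subset.1 hnot
    obtain ⟨z, hzA, hznot, hzball⟩ :=
      exists_boundary_ball (r := r₂) hr₁ hx1.2 hy2
        (by rw [dist_comm]; exact mem_closedBall.1 hy1)
    have := hQ z ⟨hzA, hznot⟩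
    refine this.trans (Set.ncard_le_ncard ?_ (χ.finite_toSet.inter_of_left _))
    exact Set.inter_subset_inter_right _ hzball
  · exact ncard_mono_ball h (hQ x ⟨hx.1, hx1⟩)

theorem coverage_threshold_eq_max_interior_boundary
    {d : ℕ} (hd : 1 ≤ d)
    (A : Set (EuclideanSpace ℝ (Fin d)))
    (hAne : A.Nonempty) (hAcompact : IsCompact A) (hfr : (frontier A).Nonempty)
    (χ : Finset (EuclideanSpace ℝ (Fin d))) (k : ℕ) (hk : 1 ≤ k) :
    radiusInf (fun r => ∀ x ∈ A,
        k ≤ ((χ : Set (EuclideanSpace ℝ (Fin d))) ∩ closedBall x r).ncard) =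
      max
        (radiusInf (fun r => ∀ x ∈ rInterior A r,
          k ≤ ((χ : Set (EuclideanSpace ℝ (Fin d))) ∩ closedBall x r).ncard))
        (radiusInf (fun r => ∀ x ∈ A \ rInterior A r,
          k ≤ ((χ : Set (EuclideanSpace ℝ (Fin d))) ∩ closedBall x r).ncard)) := by
  set Q : ℝ → Prop := fun r => ∀ x ∈ A,
      k ≤ ((χ : Set (EuclideanSpace ℝ (Fin d))) ∩ closedBall x r).ncard with hQdef
  set Qt : ℝ → Prop := fun r => ∀ x ∈ rInterior A r,
      k ≤ ((χ : Set (EuclideanSpace ℝ (Fin d))) ∩ closedBall x r).ncard with hQtdef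
  set Qb : ℝ → Prop := fun r => ∀ x ∈ A \ rInterior A r,
      k ≤ ((χ : Set (EuclideanSpace ℝ (Fin d))) ∩ closedBall x r).ncard with hQbdef
  apply le_antisymm
  · -- radiusInf Q ≤ max
    apply le_of_forall_gt_imp_ge_of_dense
    intro b hb
    have hbt : radiusInf Qt < b := lt_of_le_of_lt (le_max_left _ _) hb
    have hbb : radiusInf Qb < b := lt_of_le_of_lt (le_max_right _ _) hb
    obtain ⟨q, hq1, hq2⟩ := EReal.exists_rat_btwn_of_lt hb
    set r : ℝ := (q : ℝ) with hr
    have hrt : radiusInf Qt < (r : EReal) := lt_of_le_of_lt (le_max_left _ _) hq1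
    have hrb : radiusInf Qb < (r : EReal) := lt_of_le_of_lt (le_max_right _ _) hq1
    -- r > 0: radiusInf Qb ≥ 0 since elements are nonneg; also Qb's set nonempty? derive positivity
    obtain ⟨ρt, hρt, hρtlt⟩ := sInf_lt_iff.1 hrt
    obtain ⟨ρb, hρb, hρblt⟩ := sInf_lt_iff.1 hrb
    obtain ⟨rt, rfl, hrt0, hQt⟩ := hρt
    obtain ⟨rb, rfl, hrb0, hQb⟩ := hρb
    have hrtr : rt ≤ r := (EReal.coe_lt_coe_iff.1 hρtlt).le
    have hrbr : rb ≤ r := (EReal.coe_lt_coe_iff.1 hρblt).le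
    have hr0 : 0 < r := lt_of_lt_of_le hrt0 hrtr
    have hQr : Q r := by
      intro x hxA
      by_cases hxi : x ∈ rInterior A r
      · exact mono_tilde hrtr hQt x hxi
      · exact mono_one hrb0 hrbr hQb x ⟨hxA, hxi⟩
    have : ((r : ℝ) : EReal) ∈ {ρ : EReal | ∃ s : ℝ, ρ = (s : EReal) ∧ 0 < s ∧ Q s} :=
      ⟨r, rfl, hr0, hQr⟩
    calc radiusInf Q ≤ ((r : ℝ) : EReal) := sInf_le this
      _ ≤ b := hq2.le
  · -- max ≤ radiusInf Q
    apply max_le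
    · apply sInf_le_sInf
      rintro ρ ⟨r, rfl, hr0, hQr⟩
      exact ⟨r, rfl, hr0, fun x hx => hQr x hx.1⟩
    · apply sInf_le_sInf
      rintro ρ ⟨r, rfl, hr0, hQr⟩
      exact ⟨r, rfl, hr0, fun x hx => hQr x hx.1⟩
end
end

section
/- Let α ∈ (0,π) and u > 0, and let W_α := { (x, r·cos θ, r·sin θ) : x ∈ ℝ, r ≥ 0, θ ∈ [0,α] } ⊂ ℝ³ be the wedge of angle α. Then there exists a constant c' ∈ (0,∞), depending only on α and u, such that for every r > 0 and every point x = (x₁,x₂,x₃) ∈ W_α with ‖x‖ ≤ u·r, the Lebesgue measure of B(x,r) ∩ W_α is at least (2α/3)·r³ + c'·r²·x₃ + c'·r²·(x₂ − x₃·cot α), where B(x,r) is the closed Euclidean ball of radius r about x. -/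
open MeasureTheory Metric

noncomputable section

/-- The wedge `W_α := {(x, r cos θ, r sin θ) : x ∈ ℝ, r ≥ 0, θ ∈ [0, α]}` in `ℝ³`. -/
def wedge (α : ℝ) : Set (EuclideanSpace ℝ (Fin 3)) :=
  {p | ∃ r θ : ℝ, 0 ≤ r ∧ 0 ≤ θ ∧ θ ≤ α ∧
    p 1 = r * Real.cos θ ∧ p 2 = r * Real.sin θ}

open Set

section helpers

private lemma mp_coords : MeasurePreserving
    (fun p : EuclideanSpace ℝ (Fin 3) => ((p 0, p 1, p 2) : ℝ × ℝ × ℝ)) volume volume := by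
  have h1 := PiLp.volume_preserving_ofLp (Fin 3)
  have h2 := volume_preserving_piFinSuccAbove (fun _ : Fin 3 => ℝ) 0
  have h3 := (MeasurePreserving.id (volume : Measure ℝ)).prod
      (volume_preserving_finTwoArrow ℝ)
  have H := (h3.comp h2).comp h1
  exact H

private lemma volume_preimage3 (T : Set (ℝ × ℝ × ℝ)) (hT : MeasurableSet T) :
    volume ((fun p : EuclideanSpace ℝ (Fin 3) => ((p 0, p 1, p 2) : ℝ × ℝ × ℝ)) ⁻¹' T)
      = volume T :=
  mp_coords.measure_preimage hT.nullMeasurableSet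

private lemma meas_preimage3 (T : Set (ℝ × ℝ × ℝ)) (hT : MeasurableSet T) :
    MeasurableSet ((fun p : EuclideanSpace ℝ (Fin 3) => ((p 0, p 1, p 2) : ℝ × ℝ × ℝ)) ⁻¹' T) :=
  mp_coords.measurable hT

private lemma norm_eq3 (p : EuclideanSpace ℝ (Fin 3)) :
    ‖p‖ = Real.sqrt ((p 0) ^ 2 + (p 1) ^ 2 + (p 2) ^ 2) := by
  rw [EuclideanSpace.norm_eq]
  congr 1
  rw [Fin.sum_univ_three]
  simp [Real.norm_eq_abs, sq_abs]

private lemma norm_le_of_sq (p : EuclideanSpace ℝ (Fin 3)) {r : ℝ} (hr : 0 ≤ r)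
    (h : (p 0) ^ 2 + (p 1) ^ 2 + (p 2) ^ 2 ≤ r ^ 2) : ‖p‖ ≤ r := by
  rw [norm_eq3]
  calc Real.sqrt ((p 0) ^ 2 + (p 1) ^ 2 + (p 2) ^ 2) ≤ Real.sqrt (r ^ 2) :=
        Real.sqrt_le_sqrt h
    _ = r := Real.sqrt_sq hr

private lemma sub_apply3 (p x : EuclideanSpace ℝ (Fin 3)) (i : Fin 3) :
    (p - x) i = p i - x i := by simp

private lemma dist_le_of_sq (p x : EuclideanSpace ℝ (Fin 3)) {r : ℝ} (hr : 0 ≤ r)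
    (h : (p 0 - x 0) ^ 2 + (p 1 - x 1) ^ 2 + (p 2 - x 2) ^ 2 ≤ r ^ 2) : dist p x ≤ r := by
  rw [dist_eq_norm]
  apply norm_le_of_sq _ hr
  rw [sub_apply3, sub_apply3, sub_apply3]
  exact h

private lemma abs_coord_le_norm (x : EuclideanSpace ℝ (Fin 3)) (i : Fin 3) :
    |x i| ≤ ‖x‖ := by
  rw [EuclideanSpace.norm_eq, ← Real.sqrt_sq_eq_abs]
  apply Real.sqrt_le_sqrt
  have := Finset.single_le_sum (f := fun j => ‖x j‖ ^ 2)
    (fun j _ => sq_nonneg _) (Finset.mem_univ i)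
  simpa [Real.norm_eq_abs, sq_abs] using this

private lemma sector_area {α : ℝ} (hα₀ : 0 < α) (hαπ : α < Real.pi) (b : ℝ) :
    volume {w : ℝ × ℝ | w.1 ^ 2 + w.2 ^ 2 ≤ b ∧ 0 ≤ w.2 ∧
      0 ≤ w.1 * Real.sin α - w.2 * Real.cos α} = ENNReal.ofReal (α / 2 * b) := by
  rcases lt_or_ge b 0 with hb | hb
  · have he : {w : ℝ × ℝ | w.1 ^ 2 + w.2 ^ 2 ≤ b ∧ 0 ≤ w.2 ∧
        0 ≤ w.1 * Real.sin α - w.2 * Real.cos α} = ∅ := by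
      ext w; simp only [mem_setOf_eq, mem_empty_iff_false, iff_false]
      rintro ⟨h1, -, -⟩
      nlinarith [sq_nonneg w.1, sq_nonneg w.2]
    rw [he, measure_empty, eq_comm, ENNReal.ofReal_eq_zero]
    nlinarith
  set S : Set (ℝ × ℝ) := {w : ℝ × ℝ | w.1 ^ 2 + w.2 ^ 2 ≤ b ∧ 0 ≤ w.2 ∧
      0 ≤ w.1 * Real.sin α - w.2 * Real.cos α} with hS
  have hSm : MeasurableSet S := by
    apply MeasurableSet.inter
    · exact measurableSet_le ((measurable_fst.pow_const 2).add (measurable_snd.pow_const 2))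
        measurable_const
    apply MeasurableSet.inter
    · exact measurableSet_le measurable_const measurable_snd
    · exact measurableSet_le measurable_const
        ((measurable_fst.mul_const _).sub (measurable_snd.mul_const _))
  have hsub : S ⊆ Icc (-Real.sqrt b) (Real.sqrt b) ×ˢ Icc (-Real.sqrt b) (Real.sqrt b) := by
    rintro ⟨w1, w2⟩ ⟨h1, -, -⟩
    have e1 : |w1| ≤ Real.sqrt b := Real.abs_le_sqrt (by nlinarith [sq_nonneg w2])
    have e2 : |w2| ≤ Real.sqrt b := Real.abs_le_sqrt (by nlinarith [sq_nonneg w1])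
    rw [abs_le] at e1 e2
    exact ⟨⟨e1.1, e1.2⟩, ⟨e2.1, e2.2⟩⟩
  have hfin : volume S ≠ ⊤ := by
    refine ne_top_of_le_ne_top ?_ (measure_mono hsub)
    rw [Measure.volume_eq_prod, Measure.prod_prod]
    exact ENNReal.mul_ne_top (by simp [Real.volume_Icc]) (by simp [Real.volume_Icc])
  have hprodsub : Ioc 0 (Real.sqrt b) ×ˢ Icc 0 α ⊆ polarCoord.target := by
    rw [polarCoord_target]
    apply Set.prod_mono
    · exact Ioc_subset_Ioi_self
    · intro θ hθ
      exact ⟨lt_of_lt_of_le (by linarith [Real.pi_pos]) hθ.1, lt_of_le_of_lt hθ.2 hαπ⟩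
  have key : (volume S).toReal = α / 2 * b := by
    have h0 : (volume S).toReal = ∫ p : ℝ × ℝ, S.indicator (fun _ => (1 : ℝ)) p := by
      rw [integral_indicator_const (1 : ℝ) hSm, smul_eq_mul, mul_one]; rfl
    rw [h0, ← integral_comp_polarCoord_symm (S.indicator fun _ => (1 : ℝ))]
    have h1 : ∀ p ∈ polarCoord.target,
        p.1 • (S.indicator (fun _ => (1 : ℝ)) (polarCoord.symm p)) =
          (Ioc 0 (Real.sqrt b) ×ˢ Icc 0 α).indicator (fun q : ℝ × ℝ => q.1) p := by
      rintro ⟨ρ, θ⟩ hp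
      rw [polarCoord_target] at hp
      obtain ⟨hρ, hθ⟩ := hp
      simp only [mem_Ioi] at hρ
      simp only [mem_Ioo] at hθ
      have hiff : polarCoord.symm (ρ, θ) ∈ S ↔ (ρ, θ) ∈ Ioc 0 (Real.sqrt b) ×ˢ Icc 0 α := by
        rw [polarCoord_symm_apply]
        simp only [hS, mem_setOf_eq, mem_prod, mem_Ioc, mem_Icc]
        have hsq : (ρ * Real.cos θ) ^ 2 + (ρ * Real.sin θ) ^ 2 = ρ ^ 2 := by
          have := Real.sin_sq_add_cos_sq θ; nlinarith
        have hfac : ρ * Real.cos θ * Real.sin α - ρ * Real.sin θ * Real.cos α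
            = ρ * Real.sin (α - θ) := by rw [Real.sin_sub]; ring
        constructor
        · rintro ⟨h1, h2, h3⟩
          have hsθ : 0 ≤ Real.sin θ := nonneg_of_mul_nonneg_right (by linarith [h2]) hρ
          have hθ0 : 0 ≤ θ := by
            by_contra hc
            push_neg at hc
            exact absurd hsθ (not_le.2 (Real.sin_neg_of_neg_of_neg_pi_lt hc hθ.1))
          have hsαθ : 0 ≤ Real.sin (α - θ) := by
            have := h3; rw [hfac] at this
            exact nonneg_of_mul_nonneg_right (by linarith) hρ
          have hθα : θ ≤ α := by
            by_contra hc
            push_neg at hc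
            have : Real.sin (α - θ) < 0 :=
              Real.sin_neg_of_neg_of_neg_pi_lt (by linarith) (by linarith)
            linarith
          refine ⟨⟨hρ, ?_⟩, hθ0, hθα⟩
          rw [Real.le_sqrt hρ.le hb]
          nlinarith
        · rintro ⟨⟨-, hρ2⟩, hθ0, hθα⟩
          have hsθ : 0 ≤ Real.sin θ :=
            Real.sin_nonneg_of_nonneg_of_le_pi hθ0 (le_of_lt (lt_of_le_of_lt hθα hαπ))
          have hsαθ : 0 ≤ Real.sin (α - θ) :=
            Real.sin_nonneg_of_nonneg_of_le_pi (by linarith) (by linarith)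
          refine ⟨?_, mul_nonneg hρ.le hsθ, by rw [hfac]; exact mul_nonneg hρ.le hsαθ⟩
          rw [hsq]
          have := (Real.le_sqrt hρ.le hb).1 hρ2
          linarith
      by_cases hmem : (ρ, θ) ∈ Ioc 0 (Real.sqrt b) ×ˢ Icc 0 α
      · rw [indicator_of_mem hmem, indicator_of_mem (hiff.2 hmem), smul_eq_mul, mul_one]
      · rw [indicator_of_notMem hmem, indicator_of_notMem (fun h => hmem (hiff.1 h)),
          smul_zero]
    rw [setIntegral_congr_fun polarCoord.open_target.measurableSet h1]
    rw [setIntegral_indicator (measurableSet_Ioc.prod measurableSet_Icc),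
      inter_eq_self_of_subset_right hprodsub]
    have h2 : ∫ q : ℝ × ℝ in Ioc 0 (Real.sqrt b) ×ˢ Icc 0 α, q.1 =
        (∫ x in Ioc 0 (Real.sqrt b), x) * ∫ y in Icc 0 α, (1 : ℝ) := by
      rw [Measure.volume_eq_prod, ← setIntegral_prod_mul (fun x : ℝ => x) (fun _ => (1 : ℝ))]
      simp
    rw [h2]
    have h3 : (∫ x in Ioc 0 (Real.sqrt b), x) = b / 2 := by
      rw [← intervalIntegral.integral_of_le (Real.sqrt_nonneg b), integral_id,
        Real.sq_sqrt hb]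
      ring
    have h4 : (∫ y in Icc 0 α, (1 : ℝ)) = α := by
      rw [setIntegral_const, Real.volume_real_Icc_of_le hα₀.le, smul_eq_mul, mul_one]
      ring
    rw [h3, h4]; ring
  rw [← key, ENNReal.ofReal_toReal hfin]

private lemma meas3_sector (s c b : ℝ) :
    MeasurableSet {z : ℝ × ℝ × ℝ | z.1 ^ 2 + z.2.1 ^ 2 + z.2.2 ^ 2 ≤ b ∧ 0 ≤ z.2.2 ∧
      0 ≤ z.2.1 * s - z.2.2 * c} := by
  apply MeasurableSet.inter
  · exact measurableSet_le (((measurable_fst.pow_const 2).add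
      ((measurable_fst.comp measurable_snd).pow_const 2)).add
      ((measurable_snd.comp measurable_snd).pow_const 2)) measurable_const
  apply MeasurableSet.inter
  · exact measurableSet_le measurable_const (measurable_snd.comp measurable_snd)
  · exact measurableSet_le measurable_const
      (((measurable_fst.comp measurable_snd).mul_const _).sub
        ((measurable_snd.comp measurable_snd).mul_const _))

private lemma sector_vol {α : ℝ} (hα₀ : 0 < α) (hαπ : α < Real.pi) {r : ℝ} (hr : 0 ≤ r) :
    volume {z : ℝ × ℝ × ℝ | z.1 ^ 2 + z.2.1 ^ 2 + z.2.2 ^ 2 ≤ r ^ 2 ∧ 0 ≤ z.2.2 ∧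
      0 ≤ z.2.1 * Real.sin α - z.2.2 * Real.cos α} = ENNReal.ofReal (2 * α / 3 * r ^ 3) := by
  have hSm := meas3_sector (Real.sin α) (Real.cos α) (r ^ 2)
  rw [Measure.volume_eq_prod, Measure.prod_apply hSm]
  have hslice : ∀ t : ℝ, volume (Prod.mk t ⁻¹' {z : ℝ × ℝ × ℝ |
      z.1 ^ 2 + z.2.1 ^ 2 + z.2.2 ^ 2 ≤ r ^ 2 ∧ 0 ≤ z.2.2 ∧
      0 ≤ z.2.1 * Real.sin α - z.2.2 * Real.cos α}) =
      ENNReal.ofReal (α / 2 * (r ^ 2 - t ^ 2)) := by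
    intro t
    rw [← sector_area hα₀ hαπ (r ^ 2 - t ^ 2)]
    congr 1
    ext w
    simp only [mem_preimage, mem_setOf_eq]
    constructor
    · rintro ⟨h1, h2, h3⟩; exact ⟨by linarith, h2, h3⟩
    · rintro ⟨h1, h2, h3⟩; exact ⟨by linarith, h2, h3⟩
  simp only [hslice]
  set g : ℝ → ℝ := fun t => max (α / 2 * (r ^ 2 - t ^ 2)) 0 with hg
  have hgeq : ∀ t : ℝ, ENNReal.ofReal (α / 2 * (r ^ 2 - t ^ 2)) = ENNReal.ofReal (g t) := by
    intro t
    rcases le_total (α / 2 * (r ^ 2 - t ^ 2)) 0 with h | h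
    · rw [ENNReal.ofReal_eq_zero.2 h, hg]; simp [max_eq_right h]
    · rw [hg]; simp [max_eq_left h]
  simp only [hgeq]
  have hgc : Continuous g := (continuous_const.mul
      (continuous_const.sub (continuous_pow 2))).max continuous_const
  have hgsupp : ∀ x ∉ Icc (-r) r, g x = 0 := by
    intro x hx
    simp only [mem_Icc, not_and_or, not_le] at hx
    have : r ^ 2 - x ^ 2 ≤ 0 := by rcases hx with h | h <;> nlinarith
    exact max_eq_right (by nlinarith)
  have hgint : Integrable g := hgc.integrable_of_hasCompactSupport
    (HasCompactSupport.intro isCompact_Icc hgsupp)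
  rw [← ofReal_integral_eq_lintegral_ofReal hgint
    (Filter.Eventually.of_forall (fun t => le_max_right _ _))]
  congr 1
  have hind : g = Set.indicator (Icc (-r) r) g := by
    funext t
    by_cases ht : t ∈ Icc (-r) r
    · rw [indicator_of_mem ht]
    · rw [indicator_of_notMem ht, hgsupp t ht]
  rw [hind, integral_indicator measurableSet_Icc]
  have heq2 : ∀ t ∈ Icc (-r) r, g t = α / 2 * (r ^ 2 - t ^ 2) := by
    intro t ht
    simp only [mem_Icc] at ht
    obtain ⟨ht1, ht2⟩ := ht
    have h1 : 0 ≤ (r - t) * (r + t) := mul_nonneg (by linarith) (by linarith)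
    exact max_eq_left (by nlinarith)
  rw [setIntegral_congr_fun measurableSet_Icc heq2, integral_Icc_eq_integral_Ioc,
    ← intervalIntegral.integral_of_le (by linarith : -r ≤ r)]
  rw [intervalIntegral.integral_const_mul]
  rw [intervalIntegral.integral_sub intervalIntegrable_const
    (intervalIntegral.intervalIntegrable_pow 2)]
  rw [intervalIntegral.integral_const, integral_pow]
  simp only [smul_eq_mul]
  ring

private lemma box_vol (a₀ b₀ a₁ b₁ a₂ b₂ : ℝ) :
    volume {z : ℝ × ℝ × ℝ | z.1 ∈ Ico a₀ b₀ ∧ z.2.1 ∈ Ico a₁ b₁ ∧ z.2.2 ∈ Ico a₂ b₂}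
      = ENNReal.ofReal (b₀ - a₀) * (ENNReal.ofReal (b₁ - a₁) * ENNReal.ofReal (b₂ - a₂)) := by
  have hset : {z : ℝ × ℝ × ℝ | z.1 ∈ Ico a₀ b₀ ∧ z.2.1 ∈ Ico a₁ b₁ ∧ z.2.2 ∈ Ico a₂ b₂}
      = Ico a₀ b₀ ×ˢ (Ico a₁ b₁ ×ˢ Ico a₂ b₂) := by
    ext z; simp [Set.mem_prod, and_assoc]
  rw [hset, Measure.volume_eq_prod, Measure.prod_prod, Measure.volume_eq_prod,
    Measure.prod_prod, Real.volume_Ico, Real.volume_Ico, Real.volume_Ico]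

private lemma shear_vol (s c a₀ b₀ J1 J2 lo hi : ℝ) (hs : 0 < s) :
    volume {z : ℝ × ℝ × ℝ | z.1 ∈ Ico a₀ b₀ ∧ (z.2.1 * s - z.2.2 * c) ∈ Ico J1 J2 ∧
      z.2.2 ∈ Ico lo hi}
      = ENNReal.ofReal (b₀ - a₀) * (ENNReal.ofReal ((J2 - J1) / s) * ENNReal.ofReal (hi - lo)) := by
  set G : Set (ℝ × ℝ) := {w : ℝ × ℝ | (w.1 * s - w.2 * c) ∈ Ico J1 J2 ∧ w.2 ∈ Ico lo hi} with hG
  have hGm : MeasurableSet G := by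
    apply MeasurableSet.inter
    · exact ((measurable_fst.mul_const _).sub (measurable_snd.mul_const _)) measurableSet_Ico
    · exact measurable_snd measurableSet_Ico
  have hset : {z : ℝ × ℝ × ℝ | z.1 ∈ Ico a₀ b₀ ∧ (z.2.1 * s - z.2.2 * c) ∈ Ico J1 J2 ∧
      z.2.2 ∈ Ico lo hi} = Ico a₀ b₀ ×ˢ G := by
    ext z; simp [hG, Set.mem_prod]
  rw [hset, Measure.volume_eq_prod, Measure.prod_prod, Real.volume_Ico]
  congr 1
  rw [Measure.volume_eq_prod, Measure.prod_apply_symm hGm]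
  have hslice : (fun y : ℝ => volume ((fun x => (x, y)) ⁻¹' G)) =
      (Ico lo hi).indicator (fun _ => ENNReal.ofReal ((J2 - J1) / s)) := by
    funext y
    by_cases hy : y ∈ Ico lo hi
    · have : ((fun x => (x, y)) ⁻¹' G) = Ico ((J1 + y * c) / s) ((J2 + y * c) / s) := by
        ext x
        simp only [hG, mem_preimage, mem_setOf_eq, mem_Ico]
        constructor
        · rintro ⟨⟨h1, h2⟩, -⟩
          exact ⟨(div_le_iff₀ hs).2 (by linarith), (lt_div_iff₀ hs).2 (by linarith)⟩
        · rintro ⟨h1, h2⟩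
          rw [div_le_iff₀ hs] at h1
          rw [lt_div_iff₀ hs] at h2
          exact ⟨⟨by linarith, by linarith⟩, mem_Ico.1 hy⟩
      rw [this, indicator_of_mem hy, Real.volume_Ico]
      congr 1
      field_simp
      ring
    · have : ((fun x => (x, y)) ⁻¹' G) = ∅ := by
        ext x
        simp only [hG, mem_preimage, mem_setOf_eq, mem_empty_iff_false, iff_false]
        rintro ⟨-, h2⟩
        exact hy h2
      rw [this, indicator_of_notMem hy, measure_empty]
  rw [hslice, lintegral_indicator measurableSet_Ico, setLIntegral_const, Real.volume_Ico]

private lemma wedge_eq {α : ℝ} (hα₀ : 0 < α) (hαπ : α < Real.pi) :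
    wedge α = {p : EuclideanSpace ℝ (Fin 3) |
      0 ≤ p 2 ∧ 0 ≤ p 1 * Real.sin α - p 2 * Real.cos α} := by
  ext p
  simp only [wedge, mem_setOf_eq]
  constructor
  · rintro ⟨r, θ, hr, hθ0, hθα, h1, h2⟩
    have hsθ : 0 ≤ Real.sin θ :=
      Real.sin_nonneg_of_nonneg_of_le_pi hθ0 (le_of_lt (lt_of_le_of_lt hθα hαπ))
    have hsαθ : 0 ≤ Real.sin (α - θ) :=
      Real.sin_nonneg_of_nonneg_of_le_pi (by linarith) (by linarith)
    refine ⟨by rw [h2]; exact mul_nonneg hr hsθ, ?_⟩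
    rw [h1, h2]
    have : r * Real.cos θ * Real.sin α - r * Real.sin θ * Real.cos α
        = r * Real.sin (α - θ) := by rw [Real.sin_sub]; ring
    rw [this]
    exact mul_nonneg hr hsαθ
  · rintro ⟨h2, hlin⟩
    set R : ℝ := Real.sqrt ((p 1) ^ 2 + (p 2) ^ 2) with hR
    have hRnn : 0 ≤ R := Real.sqrt_nonneg _
    rcases eq_or_lt_of_le hRnn with hR0 | hRpos
    · have hsum : (p 1) ^ 2 + (p 2) ^ 2 = 0 := by
        rw [← Real.sqrt_eq_zero (by positivity), ← hR, ← hR0]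
      have h1z : p 1 = 0 := by nlinarith [sq_nonneg (p 1), sq_nonneg (p 2)]
      have h2z : p 2 = 0 := by nlinarith [sq_nonneg (p 1), sq_nonneg (p 2)]
      exact ⟨0, 0, le_refl 0, le_refl 0, hα₀.le, by simp [h1z], by simp [h2z]⟩
    · have hRsq : R ^ 2 = (p 1) ^ 2 + (p 2) ^ 2 := Real.sq_sqrt (by positivity)
      have hRne : R ≠ 0 := ne_of_gt hRpos
      have habs : |p 1 / R| ≤ 1 := by
        rw [abs_div, abs_of_pos hRpos, div_le_one hRpos]
        have : |p 1| ^ 2 ≤ R ^ 2 := by rw [sq_abs]; nlinarith [sq_nonneg (p 2)]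
        nlinarith [abs_nonneg (p 1)]
      rw [abs_le] at habs
      set θ : ℝ := Real.arccos (p 1 / R) with hθ
      have hcos : Real.cos θ = p 1 / R := Real.cos_arccos habs.1 habs.2
      have hsin : Real.sin θ = p 2 / R := by
        rw [hθ, Real.sin_arccos]
        have h1 : 1 - (p 1 / R) ^ 2 = (p 2 / R) ^ 2 := by
          field_simp
          nlinarith
        rw [h1, Real.sqrt_sq (by positivity)]
      have hθ0 : 0 ≤ θ := Real.arccos_nonneg _
      have hθπ : θ ≤ Real.pi := Real.arccos_le_pi _
      have hθα : θ ≤ α := by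
        by_contra hc
        push_neg at hc
        have hne : Real.sin (α - θ) < 0 :=
          Real.sin_neg_of_neg_of_neg_pi_lt (by linarith) (by linarith)
        have hpos : 0 ≤ Real.sin (α - θ) := by
          rw [Real.sin_sub, hcos, hsin]
          have : Real.sin α * (p 1 / R) - Real.cos α * (p 2 / R)
              = (p 1 * Real.sin α - p 2 * Real.cos α) / R := by ring
          rw [this]
          positivity
        linarith
      exact ⟨R, θ, hRnn, hθ0, hθα, by rw [hcos]; field_simp, by rw [hsin]; field_simp⟩

end helpers

set_option maxHeartbeats 1000000 in
theorem wedge_ball_volume_lower_bound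
    (α u : ℝ) (hα₀ : 0 < α) (hαπ : α < Real.pi) (hu : 0 < u) :
    ∃ c' : ℝ, 0 < c' ∧ ∀ r : ℝ, 0 < r → ∀ x ∈ wedge α, ‖x‖ ≤ u * r →
      (2 * α / 3) * r ^ 3 + c' * r ^ 2 * (x 2) +
          c' * r ^ 2 * (x 1 - x 2 * (Real.cos α / Real.sin α)) ≤
        (volume (closedBall x r ∩ wedge α)).toReal := by
  have hs : 0 < Real.sin α := Real.sin_pos_of_pos_of_lt_pi hα₀ hαπ
  set s : ℝ := Real.sin α with hs_def
  set c : ℝ := Real.cos α with hc_def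
  have hWeq : wedge α = {p : EuclideanSpace ℝ (Fin 3) |
      0 ≤ p 2 ∧ 0 ≤ p 1 * s - p 2 * c} := wedge_eq hα₀ hαπ
  have hs1 : s ≤ 1 := Real.sin_le_one α
  have hc1 : |c| ≤ 1 := Real.abs_cos_le_one α
  set ε : ℝ := s ^ 2 / 8 with hε_def
  have hε : 0 < ε := by positivity
  have hε8 : ε ≤ 1 / 8 := by
    rw [hε_def]; nlinarith only [hs, hs1]
  set c₀ : ℝ := ε / (2 * u + ε) with hc₀_def
  have hc₀pos : 0 < c₀ := by positivity
  have hc₀le1 : c₀ ≤ 1 := by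
    rw [hc₀_def, div_le_one (by positivity)]; linarith only [hu, hε]
  have hc₀u : c₀ * (2 * u) ≤ ε := by
    rw [hc₀_def, div_mul_eq_mul_div, div_le_iff₀ (by positivity)]
    nlinarith only [hε, hu]
  refine ⟨ε ^ 2 * c₀ * s, by positivity, ?_⟩
  intro r hr x hx hxn
  obtain ⟨hx2, hxd⟩ : 0 ≤ x 2 ∧ 0 ≤ x 1 * s - x 2 * c := by
    rwa [hWeq] at hx
  set d₂ : ℝ := x 1 * s - x 2 * c with hd₂_def
  have hcoord : ∀ i : Fin 3, |x i| ≤ u * r := fun i =>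
    le_trans (abs_coord_le_norm x i) hxn
  have hd₁u : x 2 ≤ u * r := le_trans (le_abs_self _) (hcoord 2)
  have hd₂u : d₂ ≤ 2 * (u * r) := by
    have a1 : x 1 * s ≤ |x 1| := by
      calc x 1 * s ≤ |x 1| * s := mul_le_mul_of_nonneg_right (le_abs_self _) hs.le
        _ ≤ |x 1| * 1 := mul_le_mul_of_nonneg_left hs1 (abs_nonneg _)
        _ = |x 1| := mul_one _
    have a2 : -(x 2 * c) ≤ |x 2| := by
      calc -(x 2 * c) ≤ |x 2 * c| := neg_le_abs _
        _ = |x 2| * |c| := abs_mul _ _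
        _ ≤ |x 2| * 1 := mul_le_mul_of_nonneg_left hc1 (abs_nonneg _)
        _ = |x 2| := mul_one _
    have b1 := hcoord 1
    have b2 := hcoord 2
    rw [hd₂_def]
    linarith only [a1, a2, b1, b2]
  set m₁ : ℝ := min (x 2) (ε * r) with hm₁_def
  set m₂ : ℝ := min d₂ (ε * r) with hm₂_def
  have hm₁0 : 0 ≤ m₁ := le_min hx2 (by positivity)
  have hm₂0 : 0 ≤ m₂ := le_min hxd (by positivity)
  have hm₁εr : m₁ ≤ ε * r := min_le_right _ _
  have hm₂εr : m₂ ≤ ε * r := min_le_right _ _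
  have hm₁d : m₁ ≤ x 2 := min_le_left _ _
  have hm₂d : m₂ ≤ d₂ := min_le_left _ _
  have hεr_eq : ε * r = s ^ 2 * r / 8 := by rw [hε_def]; ring
  have hεr0 : 0 ≤ ε * r := mul_nonneg hε.le hr.le
  have hs2r : s ^ 2 * r ≤ s * r := by
    nlinarith only [mul_nonneg (mul_nonneg hs.le (sub_nonneg.2 hs1)) hr.le]
  have hsr_r : s * r ≤ r := by
    nlinarith only [mul_nonneg (sub_nonneg.2 hs1) hr.le]
  have hεr8 : ε * r ≤ r / 8 := by
    linarith only [hεr_eq, hs2r, hsr_r]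
  have hms : m₁ / s ≤ r / 8 := by
    rw [div_le_iff₀ hs]
    linarith only [hm₁εr, hεr_eq, hs2r]
  have hms2 : m₂ / s ≤ r / 8 := by
    rw [div_le_iff₀ hs]
    linarith only [hm₂εr, hεr_eq, hs2r]
  have hm₁s0 : 0 ≤ m₁ / s := by positivity
  have hm₂s0 : 0 ≤ m₂ / s := by positivity
  -- the sets
  set F : EuclideanSpace ℝ (Fin 3) → ℝ × ℝ × ℝ := fun p => (p 0, p 1, p 2) with hF_def
  set T₀ : Set (ℝ × ℝ × ℝ) := {z | z.1 ^ 2 + z.2.1 ^ 2 + z.2.2 ^ 2 ≤ r ^ 2 ∧ 0 ≤ z.2.2 ∧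
      0 ≤ z.2.1 * s - z.2.2 * c} with hT₀_def
  set T₁ : Set (ℝ × ℝ × ℝ) := {z | z.1 ∈ Ico (x 0) (x 0 + ε * r) ∧
      z.2.1 ∈ Ico (x 1 + m₁ / s) (x 1 + m₁ / s + ε * r) ∧
      z.2.2 ∈ Ico (x 2 - m₁) (x 2)} with hT₁_def
  set T₂ : Set (ℝ × ℝ × ℝ) := {z | z.1 ∈ Ico (x 0) (x 0 + ε * r) ∧
      (z.2.1 * s - z.2.2 * c) ∈ Ico (d₂ - m₂) d₂ ∧
      z.2.2 ∈ Ico (x 2 + m₂ / s) (x 2 + m₂ / s + ε * r)} with hT₂_def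
  have hT₀m : MeasurableSet T₀ := meas3_sector s c (r ^ 2)
  have hT₁m : MeasurableSet T₁ :=
    (measurable_fst measurableSet_Ico).inter
      (((measurable_fst.comp measurable_snd) measurableSet_Ico).inter
        ((measurable_snd.comp measurable_snd) measurableSet_Ico))
  have hT₂m : MeasurableSet T₂ :=
    (measurable_fst measurableSet_Ico).inter
      (((((measurable_fst.comp measurable_snd).mul_const _).sub
          ((measurable_snd.comp measurable_snd).mul_const _)) measurableSet_Ico).inter
        ((measurable_snd.comp measurable_snd) measurableSet_Ico))
  set K : Set (EuclideanSpace ℝ (Fin 3)) := closedBall 0 r ∩ wedge α with hK_def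
  set S₀ : Set (EuclideanSpace ℝ (Fin 3)) := (fun p => p - x) ⁻¹' K with hS₀_def
  set A₁ : Set (EuclideanSpace ℝ (Fin 3)) := F ⁻¹' T₁ with hA₁_def
  set A₂ : Set (EuclideanSpace ℝ (Fin 3)) := F ⁻¹' T₂ with hA₂_def
  have hKeq : K = F ⁻¹' T₀ := by
    ext p
    simp only [hK_def, hWeq, hF_def, hT₀_def, mem_inter_iff, mem_closedBall_zero_iff,
      mem_preimage, mem_setOf_eq]
    constructor
    · rintro ⟨hn, hw⟩
      refine ⟨?_, hw⟩
      rw [norm_eq3] at hn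
      nlinarith only [hn,
        Real.sq_sqrt (show (0:ℝ) ≤ (p 0) ^ 2 + (p 1) ^ 2 + (p 2) ^ 2 by positivity),
        Real.sqrt_nonneg ((p 0) ^ 2 + (p 1) ^ 2 + (p 2) ^ 2), hr]
    · rintro ⟨hn, hw⟩
      exact ⟨norm_le_of_sq p hr.le hn, hw⟩
  -- measurability
  have hKm : MeasurableSet K := by rw [hKeq]; exact meas_preimage3 T₀ hT₀m
  have hS₀m : MeasurableSet S₀ := (measurable_id.sub_const x) hKm
  have hA₁m : MeasurableSet A₁ := meas_preimage3 T₁ hT₁m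
  have hA₂m : MeasurableSet A₂ := meas_preimage3 T₂ hT₂m
  -- volumes
  have hKvol : volume K = ENNReal.ofReal (2 * α / 3 * r ^ 3) := by
    rw [hKeq, volume_preimage3 T₀ hT₀m, hT₀_def]
    exact sector_vol hα₀ hαπ hr.le
  have hS₀vol : volume S₀ = ENNReal.ofReal (2 * α / 3 * r ^ 3) := by
    rw [hS₀_def, show (fun p : EuclideanSpace ℝ (Fin 3) => p - x) = (fun p => p + (-x)) from
      funext fun p => sub_eq_add_neg p x, measure_preimage_add_right]
    exact hKvol
  have hA₁vol : volume A₁ = ENNReal.ofReal (ε * r * (ε * r * m₁)) := by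
    rw [hA₁_def, volume_preimage3 T₁ hT₁m, hT₁_def, box_vol, add_sub_cancel_left,
      add_sub_cancel_left, sub_sub_cancel]
    rw [← ENNReal.ofReal_mul (by positivity), ← ENNReal.ofReal_mul (by positivity)]
  have hA₂vol : volume A₂ = ENNReal.ofReal (ε * r * (m₂ / s * (ε * r))) := by
    rw [hA₂_def, volume_preimage3 T₂ hT₂m, hT₂_def, shear_vol s c _ _ _ _ _ _ hs,
      add_sub_cancel_left, add_sub_cancel_left, sub_sub_cancel]
    rw [← ENNReal.ofReal_mul hm₂s0, ← ENNReal.ofReal_mul (by positivity : (0:ℝ) ≤ ε * r)]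
  -- subsets
  have hS₀sub : S₀ ⊆ closedBall x r ∩ wedge α := by
    intro p hp
    rw [hS₀_def, mem_preimage, hK_def, mem_inter_iff, mem_closedBall_zero_iff, hWeq] at hp
    obtain ⟨hpn, hpw⟩ := hp
    rw [mem_setOf_eq, sub_apply3, sub_apply3] at hpw
    obtain ⟨e1, e2⟩ := hpw
    constructor
    · rw [mem_closedBall, dist_eq_norm]; exact hpn
    · rw [hWeq, mem_setOf_eq]
      constructor
      · linarith only [e1, hx2]
      · linarith only [e2, hxd, hd₂_def]
  have hA₁sub : A₁ ⊆ closedBall x r ∩ wedge α := by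
    intro p hp
    rw [hA₁_def, mem_preimage, hT₁_def, mem_setOf_eq] at hp
    simp only [hF_def, mem_Ico] at hp
    obtain ⟨⟨h0a, h0b⟩, ⟨h1a, h1b⟩, ⟨h2a, h2b⟩⟩ := hp
    constructor
    · rw [mem_closedBall]
      apply dist_le_of_sq p x hr.le
      have q0 : (p 0 - x 0) ^ 2 ≤ (r / 8) ^ 2 :=
        sq_le_sq' (by linarith only [h0a, h0b, hεr8, hr]) (by linarith only [h0a, h0b, hεr8])
      have q1 : (p 1 - x 1) ^ 2 ≤ (r / 4) ^ 2 :=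
        sq_le_sq' (by linarith only [h1a, h1b, hms, hεr8, hm₁s0, hr])
          (by linarith only [h1a, h1b, hms, hεr8])
      have q2 : (p 2 - x 2) ^ 2 ≤ (r / 8) ^ 2 :=
        sq_le_sq' (by linarith only [h2a, h2b, hm₁εr, hεr8]) (by linarith only [h2a, h2b, hr])
      linarith only [q0, q1, q2, sq_nonneg r]
    · rw [hWeq, mem_setOf_eq]
      constructor
      · linarith only [h2a, hm₁d, hx2]
      · have e1 : x 1 * s + m₁ ≤ p 1 * s := by
          have h := mul_le_mul_of_nonneg_right h1a hs.le
          rw [add_mul, div_mul_cancel₀ _ hs.ne'] at h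
          linarith only [h]
        have e2 : (x 2 - p 2) * (-1) ≤ (x 2 - p 2) * c := by
          have habs := abs_le.1 hc1
          exact mul_le_mul_of_nonneg_left (by linarith only [habs.1]) (by linarith only [h2b])
        have e2' : p 2 - x 2 ≤ x 2 * c - p 2 * c := by nlinarith only [e2]
        linarith only [e1, e2', hxd, hd₂_def, h2a]
  have hA₂sub : A₂ ⊆ closedBall x r ∩ wedge α := by
    intro p hp
    rw [hA₂_def, mem_preimage, hT₂_def, mem_setOf_eq] at hp
    simp only [hF_def, mem_Ico] at hp
    obtain ⟨⟨h0a, h0b⟩, ⟨h1a, h1b⟩, ⟨h2a, h2b⟩⟩ := hp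
    have hΔ2a : m₂ / s ≤ p 2 - x 2 := by linarith only [h2a]
    have hΔ2b : p 2 - x 2 ≤ m₂ / s + ε * r := by linarith only [h2b]
    have hm2ds : m₂ / s ≤ s * r / 8 := by
      rw [div_le_iff₀ hs]
      nlinarith only [hm₂εr, hεr_eq]
    constructor
    · rw [mem_closedBall]
      apply dist_le_of_sq p x hr.le
      have q0 : (p 0 - x 0) ^ 2 ≤ (r / 8) ^ 2 :=
        sq_le_sq' (by linarith only [h0a, h0b, hεr8, hr]) (by linarith only [h0a, h0b, hεr8])
      have q2 : (p 2 - x 2) ^ 2 ≤ (r / 4) ^ 2 :=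
        sq_le_sq' (by linarith only [hΔ2a, hΔ2b, hms2, hεr8, hm₂s0, hr])
          (by linarith only [hΔ2a, hΔ2b, hms2, hεr8])
      have hq : (p 1 - x 1) * s = (p 1 * s - p 2 * c - d₂) + (p 2 - x 2) * c := by
        rw [hd₂_def]; ring
      have hΔ1 : |p 1 - x 1| ≤ 3 * r / 8 := by
        have hb1 : |(p 1 * s - p 2 * c - d₂)| ≤ m₂ := by
          rw [abs_le]
          constructor
          · linarith only [h1a]
          · linarith only [h1b, hm₂0]
        have hb2 : |(p 2 - x 2) * c| ≤ m₂ / s + ε * r := by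
          rw [abs_mul]
          calc |p 2 - x 2| * |c| ≤ |p 2 - x 2| * 1 :=
                mul_le_mul_of_nonneg_left hc1 (abs_nonneg _)
            _ = |p 2 - x 2| := mul_one _
            _ ≤ m₂ / s + ε * r := abs_le.2 ⟨by linarith only [hΔ2a, hm₂s0, hεr0], hΔ2b⟩
        have hb : |p 1 - x 1| * s ≤ m₂ + (m₂ / s + ε * r) := by
          calc |p 1 - x 1| * s = |(p 1 - x 1) * s| := by
                rw [abs_mul, abs_of_pos hs]
            _ = |(p 1 * s - p 2 * c - d₂) + (p 2 - x 2) * c| := by rw [hq]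
            _ ≤ |(p 1 * s - p 2 * c - d₂)| + |(p 2 - x 2) * c| := abs_add_le _ _
            _ ≤ m₂ + (m₂ / s + ε * r) := by linarith only [hb1, hb2]
        have hbound : m₂ + (m₂ / s + ε * r) ≤ (3 * r / 8) * s := by
          linarith only [hm₂εr, hεr_eq, hs2r, hm2ds]
        exact le_of_mul_le_mul_right (by linarith only [hb, hbound]) hs
      have q1 : (p 1 - x 1) ^ 2 ≤ (3 * r / 8) ^ 2 := by
        rw [← sq_abs]
        exact pow_le_pow_left₀ (abs_nonneg _) hΔ1 2
      linarith only [q0, q1, q2, sq_nonneg r]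
    · rw [hWeq, mem_setOf_eq]
      constructor
      · linarith only [h2a, hm₂s0, hx2]
      · linarith only [h1a, hm₂d]
  have hsub : S₀ ∪ A₁ ∪ A₂ ⊆ closedBall x r ∩ wedge α :=
    Set.union_subset (Set.union_subset hS₀sub hA₁sub) hA₂sub
  -- disjointness
  have hdisj1 : Disjoint S₀ A₁ := by
    rw [Set.disjoint_left]
    intro p hp hp'
    rw [hS₀_def, mem_preimage, hK_def, mem_inter_iff, hWeq, mem_setOf_eq] at hp
    rw [hA₁_def, mem_preimage, hT₁_def, mem_setOf_eq] at hp'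
    simp only [hF_def, mem_Ico] at hp'
    have e1 := hp.2.1
    rw [sub_apply3] at e1
    have e2 := hp'.2.2.2
    linarith only [e1, e2]
  have hdisj2 : Disjoint (S₀ ∪ A₁) A₂ := by
    rw [Set.disjoint_left]
    intro p hp hp'
    rw [hA₂_def, mem_preimage, hT₂_def, mem_setOf_eq] at hp'
    simp only [hF_def, mem_Ico] at hp'
    rcases hp with hp | hp
    · rw [hS₀_def, mem_preimage, hK_def, mem_inter_iff, hWeq, mem_setOf_eq] at hp
      have h2 := hp.2.2
      rw [sub_apply3, sub_apply3] at h2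
      have h3 := hp'.2.1.2
      rw [hd₂_def] at h3
      nlinarith only [h2, h3]
    · rw [hA₁_def, mem_preimage, hT₁_def, mem_setOf_eq] at hp
      simp only [hF_def, mem_Ico] at hp
      have h1 := hp.2.2.2
      have h2 := hp'.2.2.1
      linarith only [h1, h2, hm₂s0]
  -- put the measures together
  have hsum : volume S₀ + volume A₁ + volume A₂ ≤ volume (closedBall x r ∩ wedge α) := by
    rw [← measure_union hdisj1 hA₁m, ← measure_union hdisj2 hA₂m]
    exact measure_mono hsub
  rw [hS₀vol, hA₁vol, hA₂vol] at hsum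
  have hfin : volume (closedBall x r ∩ wedge α) ≠ ⊤ :=
    ne_top_of_le_ne_top measure_closedBall_lt_top.ne (measure_mono inter_subset_left)
  have hT := ENNReal.toReal_mono hfin hsum
  rw [ENNReal.toReal_add (ENNReal.add_ne_top.2 ⟨ENNReal.ofReal_ne_top, ENNReal.ofReal_ne_top⟩)
    ENNReal.ofReal_ne_top, ENNReal.toReal_add ENNReal.ofReal_ne_top ENNReal.ofReal_ne_top,
    ENNReal.toReal_ofReal (by positivity), ENNReal.toReal_ofReal (by positivity),
    ENNReal.toReal_ofReal (by positivity)] at hT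
  -- final real arithmetic
  have hm₁key : c₀ * (x 2) ≤ m₁ := by
    rw [hm₁_def]
    apply le_min
    · nlinarith only [hc₀le1, hx2, hc₀pos]
    · have w1 : c₀ * (x 2) ≤ c₀ * (u * r) := mul_le_mul_of_nonneg_left hd₁u hc₀pos.le
      have w2 : c₀ * (2 * u) * r ≤ ε * r := mul_le_mul_of_nonneg_right hc₀u hr.le
      have w3 : 0 ≤ ε * r := mul_nonneg hε.le hr.le
      have w4 : 0 ≤ c₀ * (u * r) := mul_nonneg hc₀pos.le (mul_nonneg hu.le hr.le)
      nlinarith only [w1, w2, w3, w4]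
  have hm₂key : c₀ * d₂ ≤ m₂ := by
    rw [hm₂_def]
    apply le_min
    · nlinarith only [hc₀le1, hxd, hc₀pos]
    · have w1 : c₀ * d₂ ≤ c₀ * (2 * (u * r)) := mul_le_mul_of_nonneg_left hd₂u hc₀pos.le
      have w2 : c₀ * (2 * u) * r ≤ ε * r := mul_le_mul_of_nonneg_right hc₀u hr.le
      nlinarith only [w1, w2]
  have key1 : ε ^ 2 * c₀ * s * r ^ 2 * (x 2) ≤ ε * r * (ε * r * m₁) := by
    have h1 : c₀ * s * (x 2) ≤ m₁ := by
      have w := mul_nonneg (mul_nonneg hc₀pos.le hx2) (sub_nonneg.2 hs1)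
      nlinarith only [hm₁key, w]
    have h2 := mul_le_mul_of_nonneg_left h1 (show (0:ℝ) ≤ ε ^ 2 * r ^ 2 by positivity)
    nlinarith only [h2]
  have key2 : ε ^ 2 * c₀ * s * r ^ 2 * (x 1 - x 2 * (c / s)) ≤ ε * r * (m₂ / s * (ε * r)) := by
    have hid : x 1 - x 2 * (c / s) = d₂ / s := by
      rw [hd₂_def]; field_simp
    rw [hid]
    have e1 : ε ^ 2 * c₀ * s * r ^ 2 * (d₂ / s) = ε ^ 2 * r ^ 2 * (c₀ * d₂) := by
      field_simp
    have e2 : ε * r * (m₂ / s * (ε * r)) = ε ^ 2 * r ^ 2 * (m₂ / s) := by ring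
    rw [e1, e2]
    apply mul_le_mul_of_nonneg_left _ (show (0:ℝ) ≤ ε ^ 2 * r ^ 2 by positivity)
    calc c₀ * d₂ ≤ m₂ := hm₂key
      _ ≤ m₂ / s := by
        rw [le_div_iff₀ hs]
        nlinarith only [hm₂0, hs1, hs]
  linarith only [hT, key1, key2]
end
end

section
/- Let m ≥ 1, let U ⊆ ℝ^m be open, and let φ : U → ℝ be twice continuously differentiable with all second partial derivatives bounded in absolute value by M on U. Let T ⊆ U be an m-dimensional simplex with vertices u_0, u_1, …, u_m (i.e. T is the convex hull of m+1 affinely independent points of U), and let ψ : ℝ^m → ℝ be the (unique) affine function with ψ(u_i) = φ(u_i) for i = 0, 1, …, m. Then for every u ∈ T, |φ(u) − ψ(u)| ≤ (m+1)²·M·(diam T)², where diam T denotes the Euclidean diameter of T. -/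
open MeasureTheory Metric

noncomputable section

theorem affine_interpolation_error_on_simplex
    {m : ℕ} (hm : 1 ≤ m)
    (U : Set (EuclideanSpace ℝ (Fin m))) (hU : IsOpen U)
    (φ : EuclideanSpace ℝ (Fin m) → ℝ) (M : ℝ)
    (hφ : ContDiffOn ℝ 2 φ U)
    (hM : ∀ x ∈ U, ∀ i j : Fin m,
      |iteratedFDerivWithin ℝ 2 φ U x
          ![EuclideanSpace.single i (1 : ℝ), EuclideanSpace.single j (1 : ℝ)]| ≤ M)
    (u : Fin (m + 1) → EuclideanSpace ℝ (Fin m))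
    (hu : AffineIndependent ℝ u)
    (hTU : convexHull ℝ (Set.range u) ⊆ U)
    (ψ : EuclideanSpace ℝ (Fin m) →ᵃ[ℝ] ℝ)
    (hψ : ∀ i : Fin (m + 1), ψ (u i) = φ (u i)) :
    ∀ v ∈ convexHull ℝ (Set.range u),
      |φ v - ψ v| ≤ ((m : ℝ) + 1) ^ 2 * M * (Metric.diam (convexHull ℝ (Set.range u))) ^ 2 := by
  intro v hv
  set T := convexHull ℝ (Set.range u) with hT
  have hTconv : Convex ℝ T := convex_convexHull ℝ _
  have hTbdd : Bornology.IsBounded T :=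
    ((Set.finite_range u).isCompact_convexHull (𝕜 := ℝ)).isBounded
  set d := Metric.diam T with hd
  have hd0 : 0 ≤ d := Metric.diam_nonneg
  have hM0 : 0 ≤ M := by
    have h0 : u 0 ∈ U := hTU (subset_convexHull ℝ _ ⟨0, rfl⟩)
    exact le_trans (abs_nonneg _) (hM (u 0) h0 ⟨0, hm⟩ ⟨0, hm⟩)
  set C : ℝ := (m : ℝ) ^ 2 * M with hC
  have hC0 : 0 ≤ C := mul_nonneg (by positivity) hM0
  set f' := fderiv ℝ φ with hf'
  -- differentiability facts
  have hφat : ∀ x ∈ U, ContDiffAt ℝ 2 φ x := fun x hx => hφ.contDiffAt (hU.mem_nhds hx)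
  have hdiff : ∀ x ∈ U, DifferentiableAt ℝ φ x := fun x hx =>
    (hφat x hx).differentiableAt (by norm_num)
  have hf'diff : ∀ x ∈ U, DifferentiableAt ℝ f' x := fun x hx =>
    ((hφat x hx).fderiv_right (m := 1) (le_refl 2)).differentiableAt (by norm_num)
  -- pointwise Hessian entries bound
  have hH : ∀ x ∈ U, ∀ i j : Fin m,
      |fderiv ℝ f' x (EuclideanSpace.single i (1:ℝ)) (EuclideanSpace.single j (1:ℝ))| ≤ M := by
    intro x hx i j
    have key : iteratedFDerivWithin ℝ 2 φ U x
        ![EuclideanSpace.single i (1:ℝ), EuclideanSpace.single j (1:ℝ)]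
        = fderiv ℝ f' x (EuclideanSpace.single i (1:ℝ)) (EuclideanSpace.single j (1:ℝ)) := by
      rw [iteratedFDerivWithin_two_apply φ hU.uniqueDiffOn hx]
      have h2 : fderivWithin ℝ (fderivWithin ℝ φ U) U x = fderivWithin ℝ f' U x :=
        fderivWithin_congr (fun y hy => fderivWithin_of_isOpen hU hy)
          (fderivWithin_of_isOpen hU hx)
      rw [h2, fderivWithin_of_isOpen hU hx]
      simp
    rw [← key]; exact hM x hx i j
  -- coordinate expansion
  have hexp : ∀ a : EuclideanSpace ℝ (Fin m), a = ∑ i, a i • EuclideanSpace.single i (1:ℝ) := by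
    intro a
    ext j
    have : (∑ i, a i • EuclideanSpace.single i (1:ℝ)) j
        = ∑ i, (a i • EuclideanSpace.single i (1:ℝ)) j := by rw [WithLp.ofLp_sum]; exact Finset.sum_apply j Finset.univ _
    rw [this]
    simp [EuclideanSpace.single_apply]
  have hcoord : ∀ (a : EuclideanSpace ℝ (Fin m)) (i : Fin m), |a i| ≤ ‖a‖ := by
    intro a i
    have h := abs_real_inner_le_norm (EuclideanSpace.single i (1:ℝ)) a
    simpa [EuclideanSpace.inner_single_left, EuclideanSpace.norm_single] using h
  -- operator norm bound on the Hessian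
  have hHnorm : ∀ x ∈ U, ‖fderiv ℝ f' x‖ ≤ C := by
    intro x hx
    set B := fderiv ℝ f' x with hB
    refine ContinuousLinearMap.opNorm_le_bound _ hC0 (fun a => ?_)
    refine ContinuousLinearMap.opNorm_le_bound _ (by positivity) (fun b => ?_)
    have hrow : ∀ c : EuclideanSpace ℝ (Fin m) →L[ℝ] ℝ,
        c b = ∑ j, b j * c (EuclideanSpace.single j (1:ℝ)) := by
      intro c
      conv_lhs => rw [hexp b]
      rw [map_sum]
      exact Finset.sum_congr rfl fun j _ => by rw [_root_.map_smul, smul_eq_mul]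
    have hab : B a b = ∑ i, ∑ j, a i * (b j *
        B (EuclideanSpace.single i (1:ℝ)) (EuclideanSpace.single j (1:ℝ))) := by
      conv_lhs => rw [hexp a]
      rw [map_sum, ContinuousLinearMap.sum_apply]
      refine Finset.sum_congr rfl (fun i _ => ?_)
      rw [_root_.map_smul, ContinuousLinearMap.smul_apply, smul_eq_mul,
        hrow (B (EuclideanSpace.single i (1:ℝ))), Finset.mul_sum]
    rw [Real.norm_eq_abs, hab]
    calc |∑ i, ∑ j, a i * (b j *
        B (EuclideanSpace.single i (1:ℝ)) (EuclideanSpace.single j (1:ℝ)))|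
        ≤ ∑ i, ∑ j, |a i| * (|b j| *
          |B (EuclideanSpace.single i (1:ℝ)) (EuclideanSpace.single j (1:ℝ))|) := by
          refine le_trans (Finset.abs_sum_le_sum_abs _ _) (Finset.sum_le_sum fun i _ => ?_)
          refine le_trans (Finset.abs_sum_le_sum_abs _ _) (Finset.sum_le_sum fun j _ => ?_)
          rw [abs_mul, abs_mul]
      _ ≤ ∑ _i : Fin m, ∑ _j : Fin m, ‖a‖ * (‖b‖ * M) := by
          refine Finset.sum_le_sum fun i _ => Finset.sum_le_sum fun j _ => ?_
          have h1 := hcoord a i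
          have h2 := hcoord b j
          have h3 := hH x hx i j
          have hb0 : 0 ≤ |b j| := abs_nonneg _
          have ha0 : 0 ≤ |a i| := abs_nonneg _
          exact mul_le_mul h1 (mul_le_mul h2 h3 (abs_nonneg _) (norm_nonneg _))
            (mul_nonneg hb0 (abs_nonneg _)) (norm_nonneg _)
      _ = C * ‖a‖ * ‖b‖ := by
          simp [Finset.sum_const, hC]
          ring
  -- Lipschitz bound on f' over T
  have hLip : ∀ x ∈ T, ∀ y ∈ T, ‖f' y - f' x‖ ≤ C * ‖y - x‖ := fun x hx y hy =>
    hTconv.norm_image_sub_le_of_norm_fderiv_le (fun z hz => hf'diff z (hTU hz))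
      (fun z hz => hHnorm z (hTU hz)) hx hy
  have hdistd : ∀ x ∈ T, ∀ y ∈ T, ‖y - x‖ ≤ d := by
    intro x hx y hy
    rw [← dist_eq_norm]
    exact Metric.dist_le_diam_of_mem hTbdd hy hx
  -- Taylor-type bound: for x ∈ T, |φ x - φ v - f' v (x - v)| ≤ C * d * ‖x - v‖
  have hTaylor : ∀ x ∈ T, |φ x - φ v - f' v (x - v)| ≤ C * d * ‖x - v‖ := by
    intro x hx
    set F : EuclideanSpace ℝ (Fin m) → ℝ := fun z => φ z - f' v z with hF
    have hFdiff : ∀ z ∈ T, DifferentiableAt ℝ F z := fun z hz =>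
      (hdiff z (hTU hz)).sub ((f' v).differentiableAt)
    have hFderiv : ∀ z ∈ T, fderiv ℝ F z = f' z - f' v := by
      intro z hz
      rw [hF]
      rw [fderiv_fun_sub (hdiff z (hTU hz)) ((f' v).differentiableAt), (f' v).fderiv]
    have hFbound : ∀ z ∈ T, ‖fderiv ℝ F z‖ ≤ C * d := by
      intro z hz
      rw [hFderiv z hz]
      calc ‖f' z - f' v‖ ≤ C * ‖z - v‖ := hLip v hv z hz
        _ ≤ C * d := mul_le_mul_of_nonneg_left (hdistd v hv z hz) hC0
    have := hTconv.norm_image_sub_le_of_norm_fderiv_le hFdiff hFbound hv hx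
    have heq : F x - F v = φ x - φ v - f' v (x - v) := by
      simp only [hF, map_sub]
      ring
    rw [heq] at this
    simpa using this
  -- barycentric coordinates
  rw [hT, convexHull_range_eq_exists_affineCombination] at hv
  obtain ⟨s, w, hw0, hw1, hvc⟩ := hv
  have hvT : v ∈ T := by
    rw [hT, convexHull_range_eq_exists_affineCombination]
    exact ⟨s, w, hw0, hw1, hvc⟩
  have hzero : ∑ i ∈ s, w i • (u i - v) = 0 := by
    have h := s.affineCombination_eq_weightedVSubOfPoint_vadd_of_sum_eq_one w u hw1 v
    rw [hvc] at h
    have h2 : s.weightedVSubOfPoint u v w = 0 := by simpa [vadd_eq_add] using h.symm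
    simpa [Finset.weightedVSubOfPoint_apply, vsub_eq_sub] using h2
  have hψv : ψ v = ∑ i ∈ s, w i * ψ (u i) := by
    rw [← hvc, Finset.map_affineCombination s u w hw1]
    rw [s.affineCombination_eq_weightedVSubOfPoint_vadd_of_sum_eq_one _ _ hw1 (0:ℝ)]
    simp [Finset.weightedVSubOfPoint_apply, Function.comp]
  -- the key identity
  have hkey : ψ v - φ v = ∑ i ∈ s, w i * (φ (u i) - φ v - f' v (u i - v)) := by
    have hsum1 : ∑ i ∈ s, w i * f' v (u i - v) = 0 := by
      have : ∑ i ∈ s, w i * f' v (u i - v) = f' v (∑ i ∈ s, w i • (u i - v)) := by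
        rw [map_sum]
        exact Finset.sum_congr rfl (fun i _ => by rw [_root_.map_smul, smul_eq_mul])
      rw [this, hzero, map_zero]
    have : ∑ i ∈ s, w i * (φ (u i) - φ v - f' v (u i - v))
        = ∑ i ∈ s, w i * φ (u i) - (∑ i ∈ s, w i) * φ v
          - ∑ i ∈ s, w i * f' v (u i - v) := by
      rw [Finset.sum_mul, ← Finset.sum_sub_distrib, ← Finset.sum_sub_distrib]
      exact Finset.sum_congr rfl (fun i _ => by ring)
    rw [this, hsum1, hw1, hψv]
    have : ∑ i ∈ s, w i * ψ (u i) = ∑ i ∈ s, w i * φ (u i) :=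
      Finset.sum_congr rfl (fun i _ => by rw [hψ i])
    rw [this]
    ring
  -- conclusion
  have hbd : |φ v - ψ v| ≤ C * d ^ 2 := by
    rw [show |φ v - ψ v| = |ψ v - φ v| by rw [abs_sub_comm], hkey]
    calc |∑ i ∈ s, w i * (φ (u i) - φ v - f' v (u i - v))|
        ≤ ∑ i ∈ s, w i * |φ (u i) - φ v - f' v (u i - v)| := by
          refine le_trans (Finset.abs_sum_le_sum_abs _ _) (Finset.sum_le_sum fun i hi => ?_)
          rw [abs_mul, abs_of_nonneg (hw0 i hi)]
      _ ≤ ∑ i ∈ s, w i * (C * d ^ 2) := by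
          refine Finset.sum_le_sum fun i hi => mul_le_mul_of_nonneg_left ?_ (hw0 i hi)
          have huiT : u i ∈ T := subset_convexHull ℝ _ ⟨i, rfl⟩
          calc |φ (u i) - φ v - f' v (u i - v)| ≤ C * d * ‖u i - v‖ := hTaylor (u i) huiT
            _ ≤ C * d * d := mul_le_mul_of_nonneg_left (hdistd v hvT (u i) huiT)
                (mul_nonneg hC0 hd0)
            _ = C * d ^ 2 := by ring
      _ = C * d ^ 2 := by rw [← Finset.sum_mul, hw1, one_mul]
  refine le_trans hbd ?_
  have hCle : C ≤ ((m : ℝ) + 1) ^ 2 * M := by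
    rw [hC]
    have : (m : ℝ) ^ 2 ≤ ((m : ℝ) + 1) ^ 2 := by nlinarith [Nat.cast_nonneg (α := ℝ) m]
    exact mul_le_mul_of_nonneg_right this hM0
  have := mul_le_mul_of_nonneg_right hCle (pow_nonneg hd0 2)
  linarith
end
end
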